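/- arXiv:1009.1817 — 4 statements merged into one kernel-verified Lean document; each statement's English description precedes it below -/
import Mathlib

section
/- Let 1 ≤ k ≤ n and let M_{k+1} denote the set of subsets of {s_1, ..., s_{n-k-1}} (viewed inside the simple transpositions of S_{n+1}). Then Σ_{A ∈ M_{k+1}} ((n-k)!/|W_A|)(t-1)^{|A|} = E_{n-k}(t). -/
open Polynomial Finset

/-- Number of descents of a permutation of `Fin m`. -/
noncomputable def des {m : ℕ} (σ : Equiv.Perm (Fin m)) : ℕ :=
  Nat.card {i : Fin m // ∃ h : (i : ℕ) + 1 < m, σ ⟨(i : ℕ) + 1, h⟩ < σ i}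

/-- The `m`-th Eulerian polynomial `∑_{σ ∈ S_m} t^{des σ}` (over `ℚ`). -/
noncomputable def Euler (m : ℕ) : Polynomial ℚ :=
  ∑ σ : Equiv.Perm (Fin m), X ^ des σ

/-- The simple transposition `s_{i+1} = (i+1, i+2)` in `S_{n+1}`. -/
def sT {n : ℕ} (i : Fin n) : Equiv.Perm (Fin (n + 1)) :=
  Equiv.swap i.castSucc i.succ

/-- The standard parabolic subgroup of `S_{n+1}` generated by a set of simple
transpositions (indexed by `A ⊆ Fin n`). -/
def Wsub {n : ℕ} (A : Finset (Fin n)) : Subgroup (Equiv.Perm (Fin (n + 1))) :=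
  Subgroup.closure (sT '' (A : Set (Fin n)))

namespace EulerAux

variable {m : ℕ}

/-- `σ` is ascending at every position in `T`. -/
def AscOn (T : Finset ℕ) (σ : Equiv.Perm (Fin m)) : Prop :=
  ∀ j ∈ T, ∀ h : j + 1 < m, σ ⟨j, Nat.lt_of_succ_lt h⟩ < σ ⟨j + 1, h⟩

noncomputable def ascCount (m : ℕ) (T : Finset ℕ) : ℕ :=
  Nat.card {σ : Equiv.Perm (Fin m) // AscOn T σ}

def gens (m : ℕ) (T : Finset ℕ) : Set (Equiv.Perm (Fin m)) :=
  {π | ∃ j, ∃ h : j + 1 < m, j ∈ T ∧ π = Equiv.swap ⟨j, Nat.lt_of_succ_lt h⟩ ⟨j + 1, h⟩}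

def Wc (m : ℕ) (T : Finset ℕ) : Subgroup (Equiv.Perm (Fin m)) :=
  Subgroup.closure (gens m T)

/-- `x` and `y` lie in the same block determined by `T`. -/
def Rel (T : Finset ℕ) (x y : Fin m) : Prop :=
  ∀ i : ℕ, min x.1 y.1 ≤ i → i < max x.1 y.1 → i ∈ T

lemma Rel.refl (T : Finset ℕ) (x : Fin m) : Rel T x x := by
  intro i h1 h2; omega

lemma Rel.symm {T : Finset ℕ} {x y : Fin m} (h : Rel T x y) : Rel T y x := by
  intro i h1 h2; exact h i (by omega) (by omega)

lemma Rel.trans {T : Finset ℕ} {x y z : Fin m} (h1 : Rel T x y) (h2 : Rel T y z) :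
    Rel T x z := by
  intro i hi1 hi2
  have : (min x.1 y.1 ≤ i ∧ i < max x.1 y.1) ∨ (min y.1 z.1 ≤ i ∧ i < max y.1 z.1) := by omega
  rcases this with ⟨a, b⟩ | ⟨a, b⟩
  · exact h1 i a b
  · exact h2 i a b

lemma rel_of_mem_Wc {T : Finset ℕ} {w : Equiv.Perm (Fin m)} (hw : w ∈ Wc m T) :
    ∀ x, Rel T x (w x) := by
  induction hw using Subgroup.closure_induction with
  | mem π hπ =>
    obtain ⟨j, h, hjT, rfl⟩ := hπ
    intro x
    rcases eq_or_ne x ⟨j, Nat.lt_of_succ_lt h⟩ with rfl | hxa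
    · rw [Equiv.swap_apply_left]
      intro i h1 h2
      simp only [Fin.val_mk] at h1 h2
      have : i = j := by omega
      subst this; exact hjT
    · rcases eq_or_ne x ⟨j + 1, h⟩ with rfl | hxb
      · rw [Equiv.swap_apply_right]
        intro i h1 h2
        simp only [Fin.val_mk] at h1 h2
        have : i = j := by omega
        subst this; exact hjT
      · rw [Equiv.swap_apply_of_ne_of_ne hxa hxb]
        exact Rel.refl T x
  | one => intro x; exact Rel.refl T x
  | mul a b _ _ iha ihb =>
    intro x
    have h1 := ihb x
    have h2 := iha (b x)
    exact h1.trans h2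
  | inv a _ iha =>
    intro x
    have := iha (a⁻¹ x)
    rw [show ∀ y, a (a⁻¹ y) = y from fun y => by simp] at this
    exact this.symm

lemma mono_aux {T : Finset ℕ} {σ : Equiv.Perm (Fin m)} (hσ : AscOn T σ) :
    ∀ d (x y : Fin m), y.1 = x.1 + d + 1 → Rel T x y → σ x < σ y := by
  intro d
  induction d with
  | zero =>
    intro x y hxy hR
    have hm : x.1 + 1 < m := by have := y.isLt; omega
    have hT : x.1 ∈ T := hR x.1 (by omega) (by omega)
    have key := hσ x.1 hT hm
    have ex : (⟨x.1, Nat.lt_of_succ_lt hm⟩ : Fin m) = x := Fin.ext rfl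
    have ey : (⟨x.1 + 1, hm⟩ : Fin m) = y := Fin.ext (by simp only [Fin.val_mk]; omega)
    rwa [ex, ey] at key
  | succ d ih =>
    intro x y hxy hR
    have hz : x.1 + 1 < m := by have := y.isLt; omega
    set z : Fin m := ⟨x.1 + 1, hz⟩ with hzdef
    have hT : x.1 ∈ T := hR x.1 (by omega) (by omega)
    have key := hσ x.1 hT hz
    have ex : (⟨x.1, Nat.lt_of_succ_lt hz⟩ : Fin m) = x := Fin.ext rfl
    rw [ex] at key
    have h2 : σ z < σ y := by
      refine ih z y (by simp [hzdef]; omega) ?_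
      intro i hi1 hi2
      refine hR i ?_ ?_ <;> simp [hzdef] at hi1 hi2 ⊢ <;> omega
    exact key.trans h2

lemma mono {T : Finset ℕ} {σ : Equiv.Perm (Fin m)} (hσ : AscOn T σ) {x y : Fin m}
    (hlt : x < y) (hR : Rel T x y) : σ x < σ y := by
  have := Fin.lt_def.1 hlt
  exact mono_aux hσ (y.1 - x.1 - 1) x y (by omega) hR

def invs (σ : Equiv.Perm (Fin m)) : Finset (Fin m × Fin m) :=
  Finset.univ.filter (fun p => p.1 < p.2 ∧ σ p.2 < σ p.1)

lemma invs_swap_lt {σ : Equiv.Perm (Fin m)} {j : ℕ} (h : j + 1 < m)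
    (hd : σ ⟨j + 1, h⟩ < σ ⟨j, Nat.lt_of_succ_lt h⟩) :
    (invs (σ * Equiv.swap ⟨j, Nat.lt_of_succ_lt h⟩ ⟨j + 1, h⟩)).card < (invs σ).card := by
  set a : Fin m := ⟨j, Nat.lt_of_succ_lt h⟩ with ha
  set b : Fin m := ⟨j + 1, h⟩ with hb
  set s := Equiv.swap a b with hs
  have hja : a.1 = j := rfl
  have hjb : b.1 = j + 1 := rfl
  have hab : (a, b) ∈ invs σ := by
    simp only [invs, mem_filter, mem_univ, true_and]
    exact ⟨by rw [Fin.lt_def, hja, hjb]; omega, hd⟩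
  have hmaps : ∀ p ∈ invs (σ * s), (s p.1, s p.2) ∈ (invs σ).erase (a, b) := by
    rintro ⟨x, y⟩ hp
    rw [invs, Finset.mem_filter] at hp; simp only [mem_univ, true_and, Equiv.Perm.mul_apply] at hp
    obtain ⟨hxy, hσ'⟩ := hp
    have hne : ¬(x = a ∧ y = b) := by
      rintro ⟨rfl, rfl⟩
      rw [Equiv.swap_apply_left, Equiv.swap_apply_right] at hσ'
      exact absurd hσ' (not_lt.2 hd.le)
    have hxy' : s x < s y := by
      rw [hs, Equiv.swap_apply_def, Equiv.swap_apply_def]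
      rw [Fin.lt_def] at hxy ⊢
      split_ifs with h1 h2 h3 h4 h5 <;>
        simp only [Fin.ext_iff, Fin.val_mk, hja, hjb, not_and] at * <;>
        omega
    refine Finset.mem_erase.2 ⟨?_, ?_⟩
    · intro hEq
      rw [Prod.ext_iff] at hEq
      obtain ⟨e1, e2⟩ := hEq
      have hx : x = b := by
        have := congrArg s e1
        rwa [hs, Equiv.swap_apply_self, Equiv.swap_apply_left] at this
      have hy : y = a := by
        have := congrArg s e2
        rwa [hs, Equiv.swap_apply_self, Equiv.swap_apply_right] at this
      subst hx; subst hy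
      rw [Fin.lt_def, hja, hjb] at hxy
      omega
    · simp only [invs, mem_filter, mem_univ, true_and]
      exact ⟨hxy', hσ'⟩
  have hinj : Set.InjOn (fun p : Fin m × Fin m => (s p.1, s p.2)) (invs (σ * s)) := by
    intro p _ q _ hpq
    rw [Prod.ext_iff] at hpq ⊢
    exact ⟨s.injective hpq.1, s.injective hpq.2⟩
  have hle := Finset.card_le_card_of_injOn _ hmaps hinj
  have hpos : 0 < (invs σ).card := Finset.card_pos.2 ⟨_, hab⟩
  rw [Finset.card_erase_of_mem hab] at hle
  omega

lemma exists_asc (T : Finset ℕ) (σ : Equiv.Perm (Fin m)) :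
    ∃ w ∈ Wc m T, AscOn T (σ * w) := by
  suffices H : ∀ N (σ : Equiv.Perm (Fin m)), (invs σ).card ≤ N →
      ∃ w ∈ Wc m T, AscOn T (σ * w) from H _ σ le_rfl
  intro N
  induction N with
  | zero =>
    intro σ hc
    by_cases hA : AscOn T σ
    · exact ⟨1, one_mem _, by simpa using hA⟩
    · exfalso
      rw [AscOn] at hA; push_neg at hA
      obtain ⟨j, hjT, h, hge⟩ := hA
      have hne : σ ⟨j + 1, h⟩ ≠ σ ⟨j, Nat.lt_of_succ_lt h⟩ := by
        intro e
        have := σ.injective e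
        rw [Fin.ext_iff] at this
        simp only [Fin.val_mk] at this
        omega
      have hlt := lt_of_le_of_ne hge hne
      have := invs_swap_lt h hlt
      omega
  | succ N ih =>
    intro σ hc
    by_cases hA : AscOn T σ
    · exact ⟨1, one_mem _, by simpa using hA⟩
    · rw [AscOn] at hA; push_neg at hA
      obtain ⟨j, hjT, h, hge⟩ := hA
      have hne : σ ⟨j + 1, h⟩ ≠ σ ⟨j, Nat.lt_of_succ_lt h⟩ := by
        intro e
        have := σ.injective e
        rw [Fin.ext_iff] at this
        simp only [Fin.val_mk] at this
        omega
      have hlt := lt_of_le_of_ne hge hne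
      have hcard := invs_swap_lt h hlt
      obtain ⟨w, hwG, hasc⟩ := ih (σ * Equiv.swap ⟨j, Nat.lt_of_succ_lt h⟩ ⟨j + 1, h⟩) (by omega)
      refine ⟨Equiv.swap ⟨j, Nat.lt_of_succ_lt h⟩ ⟨j + 1, h⟩ * w,
        mul_mem (Subgroup.subset_closure ⟨j, h, hjT, rfl⟩) hwG, ?_⟩
      rwa [← mul_assoc]

lemma eq_one_of_asc {T : Finset ℕ} {σ w : Equiv.Perm (Fin m)} (hw : w ∈ Wc m T)
    (h1 : AscOn T σ) (h2 : AscOn T (σ * w)) : w = 1 := by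
  have key : ∀ v : ℕ, ∀ x : Fin m, x.1 = v → w x = x := by
    intro v
    induction v using Nat.strong_induction_on with
    | _ v ih =>
      intro x hxv
      have hlow : ∀ y : Fin m, y < x → w y = y := fun y hy =>
        ih y.1 (by rw [← hxv]; exact Fin.lt_def.1 hy) y rfl
      by_contra hne
      have hwx : x < w x := by
        rcases lt_trichotomy (w x) x with hlt | heq | hgt
        · have h3 := hlow (w x) hlt
          have h4 : w x = x := w.injective h3
          exact absurd h4 hne
        · exact absurd heq hne
        · exact hgt
      have hwinv : x < w⁻¹ x := by
        rcases lt_trichotomy (w⁻¹ x) x with hlt | heq | hgt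
        · have h3 := hlow (w⁻¹ x) hlt
          rw [show ∀ y, w (w⁻¹ y) = y from fun y => by simp] at h3
          rw [← h3] at hlt
          exact absurd hlt (lt_irrefl x)
        · have := congrArg w heq
          rw [show ∀ y, w (w⁻¹ y) = y from fun y => by simp] at this
          exact absurd this.symm hne
        · exact hgt
      have r1 := rel_of_mem_Wc hw x
      have r2 := rel_of_mem_Wc (inv_mem hw) x
      have m1 : σ x < σ (w x) := mono h1 hwx r1
      have m2 : (σ * w) x < (σ * w) (w⁻¹ x) := mono h2 hwinv r2
      rw [Equiv.Perm.mul_apply, Equiv.Perm.mul_apply, show ∀ y, w (w⁻¹ y) = y from fun y => by simp] at m2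
      exact absurd m1 (not_lt.2 m2.le)
  exact Equiv.ext fun x => (key x.1 x rfl).trans rfl

lemma card_Wc_mul_ascCount (m : ℕ) (T : Finset ℕ) :
    Nat.card (Wc m T) * ascCount m T = m.factorial := by
  have e : {σ : Equiv.Perm (Fin m) // AscOn T σ} ≃ (Equiv.Perm (Fin m) ⧸ Wc m T) := by
    refine Equiv.ofBijective (fun σ => QuotientGroup.mk σ.1) ⟨?_, ?_⟩
    · rintro ⟨σ, hσ⟩ ⟨τ, hτ⟩ hEq
      simp only at hEq
      rw [QuotientGroup.eq] at hEq
      have h1 := eq_one_of_asc hEq hσ (by rwa [mul_inv_cancel_left])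
      exact Subtype.ext (inv_mul_eq_one.mp h1)
    · intro q
      refine QuotientGroup.induction_on q fun z => ?_
      obtain ⟨w, hwG, hasc⟩ := exists_asc T z
      refine ⟨⟨z * w, hasc⟩, ?_⟩
      simp only
      rw [QuotientGroup.eq]
      simpa [mul_inv_rev, mul_assoc] using inv_mem hwG
  have hq : (Wc m T).index = ascCount m T := by
    rw [Subgroup.index, ascCount, Nat.card_congr e]
  rw [← hq, Subgroup.card_mul_index, Nat.card_eq_fintype_card, Fintype.card_perm,
    Fintype.card_fin]

lemma viaEmbedding_swap {α β : Type*} [DecidableEq α] [DecidableEq β] (ι : α ↪ β) (a b : α) :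
    (Equiv.swap a b).viaEmbedding ι = Equiv.swap (ι a) (ι b) := by
  ext x
  by_cases hx : x ∈ Set.range ι
  · obtain ⟨y, rfl⟩ := hx
    rw [Equiv.Perm.viaEmbedding_apply]
    rcases eq_or_ne y a with rfl | hya
    · rw [Equiv.swap_apply_left, Equiv.swap_apply_left]
    · rcases eq_or_ne y b with rfl | hyb
      · rw [Equiv.swap_apply_right, Equiv.swap_apply_right]
      · rw [Equiv.swap_apply_of_ne_of_ne hya hyb,
          Equiv.swap_apply_of_ne_of_ne (fun e => hya (ι.injective e))
            (fun e => hyb (ι.injective e))]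
  · rw [Equiv.Perm.viaEmbedding_apply_of_notMem _ _ _ hx,
      Equiv.swap_apply_of_ne_of_ne (fun e => hx ⟨a, e.symm⟩) (fun e => hx ⟨b, e.symm⟩)]

lemma Wsub_eq_map {n m : ℕ} (hmn : m ≤ n + 1) (A : Finset (Fin n))
    (hA : ∀ j ∈ A, (j : ℕ) + 1 < m) :
    (Wc m (A.image Fin.val)).map
        (Equiv.Perm.viaEmbeddingHom (Fin.castLEEmb hmn)) = Wsub A := by
  rw [Wc, MonoidHom.map_closure, Wsub]
  congr 1
  ext π
  simp only [Set.mem_image, gens, Set.mem_setOf_eq]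
  constructor
  · rintro ⟨π', ⟨j, hj, hjT, rfl⟩, rfl⟩
    obtain ⟨j0, hj0A, rfl⟩ := Finset.mem_image.1 hjT
    refine ⟨j0, hj0A, ?_⟩
    rw [Equiv.Perm.viaEmbeddingHom_apply, viaEmbedding_swap, sT]
    congr 1 <;> exact Fin.ext rfl
  · rintro ⟨j0, hj0A, rfl⟩
    have hj : (j0 : ℕ) + 1 < m := hA j0 hj0A
    refine ⟨Equiv.swap ⟨(j0 : ℕ), Nat.lt_of_succ_lt hj⟩ ⟨(j0 : ℕ) + 1, hj⟩,
      ⟨(j0 : ℕ), hj, Finset.mem_image_of_mem _ hj0A, rfl⟩, ?_⟩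
    rw [Equiv.Perm.viaEmbeddingHom_apply, viaEmbedding_swap, sT]
    congr 1 <;> exact Fin.ext rfl

lemma card_Wsub {n m : ℕ} (hmn : m ≤ n + 1) (A : Finset (Fin n))
    (hA : ∀ j ∈ A, (j : ℕ) + 1 < m) :
    Nat.card (Wsub A) = Nat.card (Wc m (A.image Fin.val)) := by
  rw [← Wsub_eq_map hmn A hA]
  exact (Nat.card_congr ((Wc m (A.image Fin.val)).equivMapOfInjective _
    (Equiv.Perm.viaEmbeddingHom_injective _)).toEquiv).symm

lemma ratio {n m : ℕ} (hmn : m ≤ n + 1) (A : Finset (Fin n))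
    (hA : ∀ j ∈ A, (j : ℕ) + 1 < m) :
    ((m.factorial : ℚ) / (Nat.card (Wsub A) : ℚ)) = (ascCount m (A.image Fin.val) : ℚ) := by
  have h0 : 0 < Nat.card (Wc m (A.image Fin.val)) := Nat.card_pos
  rw [card_Wsub hmn A hA, ← card_Wc_mul_ascCount m (A.image Fin.val), Nat.cast_mul,
    mul_div_cancel_left₀]
  exact_mod_cast h0.ne'

lemma sum_powerset_pow {ι : Type*} [DecidableEq ι] (u : Finset ι) :
    ∑ A ∈ u.powerset, ((X : ℚ[X]) - 1) ^ A.card = X ^ u.card := by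
  have h := Finset.prod_add (fun _ : ι => (X : ℚ[X]) - 1) (fun _ => 1) u
  simpa [sub_add_cancel, Finset.prod_const] using h.symm

lemma card_ascF {n m : ℕ} (hmn : m ≤ n + 1) (σ : Equiv.Perm (Fin m)) :
    des (Fin.revPerm * σ) =
      (Finset.univ.filter (fun j : Fin n =>
        ∃ h : (j : ℕ) + 1 < m, σ ⟨(j : ℕ), Nat.lt_of_succ_lt h⟩ < σ ⟨(j : ℕ) + 1, h⟩)).card := by
  classical
  rw [des, Nat.card_eq_fintype_card, Fintype.card_subtype]
  refine Finset.card_bij (fun a ha => ⟨(a : ℕ), ?_⟩) ?_ ?_ ?_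
  · simp only [mem_filter, mem_univ, true_and] at ha
    obtain ⟨h, _⟩ := ha
    omega
  · intro a ha
    simp only [mem_filter, mem_univ, true_and] at ha ⊢
    obtain ⟨h, hlt⟩ := ha
    refine ⟨h, ?_⟩
    rw [Equiv.Perm.mul_apply, Equiv.Perm.mul_apply, Fin.revPerm_apply, Fin.revPerm_apply,
      Fin.rev_lt_rev] at hlt
    convert hlt using 2 <;> exact Fin.ext rfl
  · intro a _ b _ hab
    rw [Fin.ext_iff] at hab ⊢
    exact hab
  · intro j hj
    simp only [mem_filter, mem_univ, true_and] at hj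
    obtain ⟨h, hlt⟩ := hj
    refine ⟨⟨(j : ℕ), Nat.lt_of_succ_lt h⟩, ?_, Fin.ext rfl⟩
    simp only [mem_filter, mem_univ, true_and]
    refine ⟨h, ?_⟩
    rw [Equiv.Perm.mul_apply, Equiv.Perm.mul_apply, Fin.revPerm_apply, Fin.revPerm_apply,
      Fin.rev_lt_rev]
    convert hlt using 2 <;> exact Fin.ext rfl

end EulerAux

theorem sum_Mk1_eq_eulerian (n k : ℕ) (hk1 : 1 ≤ k) (hkn : k ≤ n) :
    ∑ A ∈ Finset.univ.filter (fun A : Finset (Fin n) =>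
        ∀ j ∈ A, (j : ℕ) < n - k - 1),
      (((n - k).factorial : ℚ) / (Nat.card ↥(Wsub A) : ℚ)) • (X - 1) ^ A.card
      = Euler (n - k) := by
  classical
  set m := n - k with hm
  have hmn : m ≤ n + 1 := by omega
  set S : Finset (Fin n) := Finset.univ.filter (fun j : Fin n => (j : ℕ) + 1 < m) with hS
  set ascF : Equiv.Perm (Fin m) → Finset (Fin n) := fun σ =>
    Finset.univ.filter (fun j : Fin n =>
      ∃ h : (j : ℕ) + 1 < m, σ ⟨(j : ℕ), Nat.lt_of_succ_lt h⟩ < σ ⟨(j : ℕ) + 1, h⟩) with hascF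
  have hps : (Finset.univ.filter (fun A : Finset (Fin n) => ∀ j ∈ A, (j : ℕ) < m - 1))
      = S.powerset := by
    ext A
    simp only [mem_filter, mem_univ, true_and, mem_powerset, Finset.subset_iff, hS]
    constructor
    · intro h j hj
      have := h j hj
      omega
    · intro h j hj
      have := h hj
      omega
  rw [hps]
  have step1 : ∀ A ∈ S.powerset,
      ((m.factorial : ℚ) / (Nat.card ↥(Wsub A) : ℚ)) • ((X : ℚ[X]) - 1) ^ A.card
      = ∑ σ : Equiv.Perm (Fin m),
          (if EulerAux.AscOn (A.image Fin.val) σ then ((X : ℚ[X]) - 1) ^ A.card else 0) := by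
    intro A hA
    have hA' : ∀ j ∈ A, (j : ℕ) + 1 < m := by
      intro j hj
      have := Finset.mem_powerset.1 hA hj
      simp only [hS, mem_filter, mem_univ, true_and] at this
      exact this
    rw [EulerAux.ratio hmn A hA']
    have hcnt : EulerAux.ascCount m (A.image Fin.val)
        = ∑ σ : Equiv.Perm (Fin m),
            (if EulerAux.AscOn (A.image Fin.val) σ then 1 else 0) := by
      rw [EulerAux.ascCount, Nat.card_eq_fintype_card, Fintype.card_subtype,
        Finset.card_filter]
    rw [hcnt]
    push_cast
    rw [Finset.sum_smul]
    refine Finset.sum_congr rfl fun σ _ => ?_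
    split_ifs <;> simp
  rw [Finset.sum_congr rfl step1, Finset.sum_comm]
  have step2 : ∀ σ : Equiv.Perm (Fin m),
      (∑ A ∈ S.powerset,
        if EulerAux.AscOn (A.image Fin.val) σ then ((X : ℚ[X]) - 1) ^ A.card else 0)
      = X ^ (ascF σ).card := by
    intro σ
    rw [← Finset.sum_filter]
    have hset : S.powerset.filter (fun A => EulerAux.AscOn (A.image Fin.val) σ)
        = (ascF σ).powerset := by
      ext A
      simp only [mem_filter, mem_powerset]
      constructor
      · rintro ⟨hAS, hasc⟩
        intro j hj
        have hjS := hAS hj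
        simp only [hS, mem_filter, mem_univ, true_and] at hjS
        simp only [hascF, mem_filter, mem_univ, true_and]
        exact ⟨hjS, hasc (j : ℕ) (Finset.mem_image_of_mem _ hj) hjS⟩
      · intro hsub
        have hAS : A ⊆ S := by
          intro j hj
          have := hsub hj
          simp only [hascF, mem_filter, mem_univ, true_and] at this
          obtain ⟨h', _⟩ := this
          simp only [hS, mem_filter, mem_univ, true_and]
          exact h'
        refine ⟨hAS, ?_⟩
        intro j hjT h
        obtain ⟨j0, hj0, rfl⟩ := Finset.mem_image.1 hjT
        have := hsub hj0
        simp only [hascF, mem_filter, mem_univ, true_and] at this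
        obtain ⟨h', hlt⟩ := this
        exact hlt
    rw [hset, EulerAux.sum_powerset_pow]
  rw [Finset.sum_congr rfl (fun σ _ => step2 σ)]
  show _ = ∑ σ : Equiv.Perm (Fin m), (X : ℚ[X]) ^ des σ
  refine Fintype.sum_equiv (Equiv.mulLeft (Fin.revPerm : Equiv.Perm (Fin m))) _ _ fun σ => ?_
  rw [Equiv.coe_mulLeft]
  rw [EulerAux.card_ascF hmn σ]
end

section
/- For all n ≥ 2, the polynomial E_{n+1}(t) - C(n+1,2)·t·E_{n-1}(t) has symmetric coefficients: if h(t) = Σ_{i=0}^{n} h_i t^i = E_{n+1}(t) - C(n+1,2) t E_{n-1}(t), then h_i = h_{n-i} for all 0 ≤ i ≤ n. -/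
open Polynomial Finset

/-- The `m`-th Eulerian polynomial `∑_{σ ∈ S_m} t^{des σ}` (over `ℤ`). -/
noncomputable def EulerZ (m : ℕ) : Polynomial ℤ :=
  ∑ σ : Equiv.Perm (Fin m), X ^ des σ

open Classical in
lemma des_eq_card {m : ℕ} (σ : Equiv.Perm (Fin m)) :
    des σ = (univ.filter
      (fun i : Fin m => ∃ h : (i : ℕ) + 1 < m, σ ⟨(i : ℕ) + 1, h⟩ < σ i)).card := by
  rw [des, Nat.card_eq_fintype_card, Fintype.card_subtype]

open Classical in
lemma card_Q {m : ℕ} :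
    (univ.filter (fun i : Fin m => (i : ℕ) + 1 < m)).card = m - 1 := by
  cases m with
  | zero => simp
  | succ k =>
    have h : (univ.filter (fun i : Fin (k+1) => (i : ℕ) + 1 < k + 1))
        = univ.erase (Fin.last k) := by
      ext i
      have h2 := i.isLt
      have h3 : (i = Fin.last k) ↔ (i : ℕ) = k := by
        rw [Fin.ext_iff, Fin.val_last]
      simp only [mem_filter, mem_univ, true_and, mem_erase, Ne, and_true, h3]
      omega
    rw [h, card_erase_of_mem (mem_univ _), card_univ, Fintype.card_fin]

open Classical in
lemma des_le {m : ℕ} (σ : Equiv.Perm (Fin m)) : des σ ≤ m - 1 := by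
  rw [des_eq_card]
  calc _ ≤ (univ.filter (fun i : Fin m => (i : ℕ) + 1 < m)).card := by
        apply card_le_card
        apply Finset.monotone_filter_right
        rintro i - ⟨h, -⟩
        exact h
    _ = m - 1 := card_Q

/-- Auxiliary involution sending `a` to `m - 2 - a`. -/
def brd {m : ℕ} (a : Fin m) : Fin m := ⟨m - 2 - (a : ℕ), by have := a.isLt; omega⟩

@[simp] lemma brd_val {m : ℕ} (a : Fin m) : (brd a : ℕ) = m - 2 - (a : ℕ) := rfl

open Classical in
lemma des_mul_rev {m : ℕ} (σ : Equiv.Perm (Fin m)) :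
    des (σ * Fin.revPerm) = (m - 1) - des σ := by
  rw [des_eq_card, des_eq_card]
  set B := univ.filter
      (fun i : Fin m => ∃ h : (i : ℕ) + 1 < m, σ ⟨(i : ℕ) + 1, h⟩ < σ i) with hB
  set C := univ.filter (fun i : Fin m => (i : ℕ) + 1 < m) with hC
  have hBC : B ⊆ C := by
    apply Finset.monotone_filter_right
    rintro i - ⟨h, -⟩
    exact h
  rcases Nat.eq_zero_or_pos m with rfl | hm
  · have h0 : ∀ s : Finset (Fin 0), #s = 0 := fun s =>
      Nat.le_zero.mp (le_trans (card_le_univ s) (by simp))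
    rw [h0, h0]
  have happ : ∀ x : Fin m, (σ * (Fin.revPerm : Equiv.Perm (Fin m))) x = σ (Fin.rev x) :=
    fun _ => rfl
  have hrev : ∀ (x : ℕ) (hx : x < m), Fin.rev (⟨x, hx⟩ : Fin m) = ⟨m - (x+1), by omega⟩ := by
    intro x hx; rfl
  have key : (univ.filter
      (fun i : Fin m => ∃ h : (i : ℕ) + 1 < m,
        (σ * (Fin.revPerm : Equiv.Perm (Fin m))) ⟨(i : ℕ) + 1, h⟩
          < (σ * (Fin.revPerm : Equiv.Perm (Fin m))) i)).card = (C \ B).card := by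
    apply card_nbij' (i := brd) (j := brd)
    · -- hi
      intro a ha
      simp only [mem_coe, mem_filter, mem_univ, true_and] at ha
      obtain ⟨h1, h2⟩ := ha
      rw [happ, happ, hrev, hrev] at h2
      simp only [mem_coe, hC, hB, mem_sdiff, mem_filter, mem_univ, true_and, brd_val]
      refine ⟨by omega, ?_⟩
      rintro ⟨h3, h4⟩
      simp only [brd, brd_val] at h4
      simp only [show m - 2 - (a : ℕ) + 1 = m - ((a : ℕ) + 1) from by omega] at h4
      simp only [show m - 2 - (a : ℕ) = m - ((a : ℕ) + 1 + 1) from by omega] at h4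
      exact lt_asymm h2 h4
    · -- hj
      intro b hb
      simp only [mem_coe, hC, hB, mem_sdiff, mem_filter, mem_univ, true_and] at hb
      obtain ⟨h1, h2⟩ := hb
      simp only [mem_coe, mem_filter, mem_univ, true_and]
      refine ⟨by simp only [brd_val]; omega, ?_⟩
      rw [happ, happ, hrev, hrev]
      simp only [brd, brd_val]
      simp only [show m - (m - 2 - (b : ℕ) + 1 + 1) = (b : ℕ) from by omega]
      simp only [show m - (m - 2 - (b : ℕ) + 1) = (b : ℕ) + 1 from by omega]
      have hne : σ ⟨(b : ℕ), b.isLt⟩ ≠ σ ⟨(b : ℕ) + 1, h1⟩ := by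
        intro h
        have h' := σ.injective h
        rw [Fin.ext_iff] at h'
        simp at h'
      have hle : ¬ σ ⟨(b : ℕ) + 1, h1⟩ < σ ⟨(b : ℕ), b.isLt⟩ := fun h => h2 ⟨h1, h⟩
      exact lt_of_le_of_ne (not_lt.1 hle) hne
    · intro a ha
      simp only [mem_coe, mem_filter, mem_univ, true_and] at ha
      obtain ⟨h1, -⟩ := ha
      exact Fin.ext (by simp only [brd_val]; omega)
    · intro b hb
      simp only [mem_coe, hC, mem_sdiff, mem_filter, mem_univ, true_and] at hb
      exact Fin.ext (by simp only [brd_val]; omega)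
  rw [key, card_sdiff_of_subset hBC, hC, card_Q]

open Classical in
lemma euler_coeff (m k : ℕ) :
    (EulerZ m).coeff k = ∑ σ : Equiv.Perm (Fin m), if des σ = k then (1 : ℤ) else 0 := by
  rw [EulerZ, Polynomial.finset_sum_coeff]
  refine Finset.sum_congr rfl fun σ _ => ?_
  rw [Polynomial.coeff_X_pow]
  simp [eq_comm]

lemma euler_coeff_zero {m k : ℕ} (hk : m - 1 < k) : (EulerZ m).coeff k = 0 := by
  rw [euler_coeff]
  refine Finset.sum_eq_zero fun σ _ => ?_
  have := des_le σ
  rw [if_neg (by omega)]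

lemma euler_symm (m k : ℕ) (hk : k ≤ m - 1) :
    (EulerZ m).coeff k = (EulerZ m).coeff (m - 1 - k) := by
  classical
  rw [euler_coeff, euler_coeff]
  rw [← Equiv.sum_comp (Equiv.mulRight (Fin.revPerm : Equiv.Perm (Fin m)))
    (fun σ => if des σ = m - 1 - k then (1 : ℤ) else 0)]
  refine Finset.sum_congr rfl fun σ _ => ?_
  have h1 := des_le σ
  simp only [Equiv.coe_mulRight, des_mul_rev]
  congr 1
  simp only [eq_iff_iff]
  omega

theorem hpoly_palindromic (n : ℕ) (hn : 2 ≤ n) (i : ℕ) (hi : i ≤ n) :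
    (EulerZ (n + 1) - ((n + 1).choose 2 : ℤ) • (X * EulerZ (n - 1))).coeff i
      = (EulerZ (n + 1) - ((n + 1).choose 2 : ℤ) • (X * EulerZ (n - 1))).coeff (n - i) := by
  have h1 : (EulerZ (n+1)).coeff i = (EulerZ (n+1)).coeff (n - i) := by
    have := euler_symm (n+1) i (by omega)
    simpa using this
  have h2 : (X * EulerZ (n-1)).coeff i = (X * EulerZ (n-1)).coeff (n - i) := by
    rcases Nat.eq_zero_or_pos i with rfl | hi0
    · rw [Nat.sub_zero]
      obtain ⟨n', rfl⟩ : ∃ n', n = n' + 1 := ⟨n - 1, by omega⟩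
      rw [Polynomial.coeff_X_mul, Polynomial.mul_coeff_zero]
      simp only [Polynomial.coeff_X_zero, zero_mul]
      exact (euler_coeff_zero (by omega)).symm
    rcases eq_or_lt_of_le hi with rfl | hin
    · rw [Nat.sub_self]
      obtain ⟨i', rfl⟩ : ∃ i', i = i' + 1 := ⟨i - 1, by omega⟩
      rw [Polynomial.coeff_X_mul, Polynomial.mul_coeff_zero]
      simp only [Polynomial.coeff_X_zero, zero_mul]
      exact euler_coeff_zero (by omega)
    · obtain ⟨i', rfl⟩ : ∃ i', i = i' + 1 := ⟨i - 1, by omega⟩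
      obtain ⟨j', hj'⟩ : ∃ j', n - (i' + 1) = j' + 1 := ⟨n - i' - 2, by omega⟩
      rw [hj', Polynomial.coeff_X_mul, Polynomial.coeff_X_mul]
      have := euler_symm (n-1) i' (by omega)
      rw [this]
      congr 1
      omega
  simp only [Polynomial.coeff_sub, Polynomial.coeff_smul, h1, h2]
end

section
/- For all n ≥ 2, every coefficient of the polynomial E_{n+1}(t) - C(n+1,2)·t·E_{n-1}(t) is nonnegative (in fact positive in degrees 0 through n). -/
open Polynomial Finset

/-- Eulerian numbers, recursively. -/
def Anat : ℕ → ℕ → ℕ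
  | 0, 0 => 1
  | 0, _+1 => 0
  | m+1, 0 => Anat m 0
  | m+1, k+1 => (k+2) * Anat m (k+1) + (m-k) * Anat m k

lemma Anat_zero (m : ℕ) : Anat m 0 = 1 := by
  induction m with
  | zero => rfl
  | succ m ih => simpa [Anat] using ih

lemma Anat_vanish : ∀ m k, 1 ≤ m → m ≤ k → Anat m k = 0 := by
  intro m
  induction m with
  | zero => omega
  | succ m ih =>
    intro k h1 h2
    match k, h2 with
    | k+1, h2 =>
      rcases Nat.eq_zero_or_pos m with hm | hm
      · subst hm
        rw [Anat]
        simp [Anat]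
      · rw [Anat, ih (k+1) hm (by omega), ih k hm (by omega)]
        simp

lemma Anat_pos : ∀ m k, k < m → 1 ≤ Anat m k := by
  intro m
  induction m with
  | zero => omega
  | succ m ih =>
    intro k hk
    match k with
    | 0 => rw [Anat_zero]
    | k+1 =>
      rw [Anat]
      have h1 : 1 ≤ Anat m k := ih k (by omega)
      have h2 : 1 ≤ m - k := by omega
      calc 1 ≤ (m-k) * Anat m k := Nat.one_le_iff_ne_zero.2 (by positivity)
      _ ≤ _ := Nat.le_add_left _ _

/-- coefficient in the strengthened inequality -/
def cZ (n j : ℤ) : ℤ := n*(n+1) + (n-2*(j+1))^2 + 2*n - 2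

lemma quad_aux (u : ℤ) : 0 ≤ 4*u^2 - 3*u ∧ 0 ≤ 4*u^2 + 3*u := by
  rcases le_or_gt u 0 with h | h
  · constructor
    · nlinarith [sq_nonneg u]
    · nlinarith [sq_nonneg (u+1)]
  · constructor
    · nlinarith [sq_nonneg (u-1)]
    · nlinarith [sq_nonneg u]

lemma coeffA (p i : ℤ) (hp : 4 ≤ p) :
    (i+2) * cZ (p+2) (i+1) ≤ (i+3) * cZ (p+1) (i+1) := by
  have key : 2*((i+3) * cZ (p+1) (i+1) - (i+2) * cZ (p+2) (i+1))
      = 4*(p-2*i-2)^2 - 3*(p-2*i-2) + (p+2) - 6 := by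
    unfold cZ; ring
  have := (quad_aux (p-2*i-2)).1
  linarith

lemma coeffB (p i : ℤ) (hp : 4 ≤ p) :
    (p-i) * cZ (p+2) (i+1) ≤ (p+1-i) * cZ (p+1) i := by
  have key : 2*((p+1-i) * cZ (p+1) i - (p-i) * cZ (p+2) (i+1))
      = 4*(p-2*i-2)^2 + 3*(p-2*i-2) + (p+2) - 6 := by
    unfold cZ; ring
  have := (quad_aux (p-2*i-2)).2
  linarith

lemma Anat_succ_succ (m k : ℕ) :
    Anat (m+1) (k+1) = (k+2) * Anat m (k+1) + (m-k) * Anat m k := by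
  rw [Anat]

lemma KZ : ∀ p j : ℕ, cZ (p+2) j * (Anat (p+1) j : ℤ) ≤ 2 * (Anat (p+3) (j+1) : ℤ) := by
  intro p
  induction p using Nat.strong_induction_on with
  | _ p IH =>
  intro j
  by_cases hj : p + 1 ≤ j
  · rw [Anat_vanish (p+1) j (by omega) hj]
    simp only [Nat.cast_zero, mul_zero]
    positivity
  push_neg at hj
  by_cases hp : p < 4
  · -- base cases
    interval_cases p <;> interval_cases j <;> decide
  push_neg at hp
  obtain ⟨q, rfl⟩ : ∃ q, p = q + 1 := ⟨p - 1, by omega⟩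
  rcases Nat.eq_zero_or_pos j with rfl | hjpos
  · -- j = 0
    have h1 := Anat_succ_succ (q+3) 0
    have h2 := IH q (by omega) 0
    rw [Anat_zero] at h2
    push_cast at h2
    rw [show q+1+1 = q+2 from rfl, show q+1+3 = q+4 from rfl,
      show (0:ℕ)+1 = 1 from rfl, Anat_zero, h1, show q+3-0 = q+3 from rfl,
      show (0:ℕ)+2 = 2 from rfl, show (0:ℕ)+1 = 1 from rfl, Anat_zero]
    push_cast
    unfold cZ at h2 ⊢
    nlinarith [h2]
  obtain ⟨i, rfl⟩ : ∃ i, j = i + 1 := ⟨j - 1, by omega⟩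
  have hiq : i ≤ q := by omega
  obtain ⟨r, rfl⟩ : ∃ r, q = i + r := ⟨q - i, by omega⟩
  have hrec1 : (Anat (i+r+4) (i+2) : ℤ)
      = ((i:ℤ)+3) * Anat (i+r+3) (i+2) + ((r:ℤ)+2) * Anat (i+r+3) (i+1) := by
    have h := Anat_succ_succ (i+r+3) (i+1)
    rw [show i+r+3-(i+1) = r+2 by omega] at h
    rw [show i+r+4 = i+r+3+1 from rfl, show i+2 = i+1+1 from rfl, h]
    push_cast
    ring
  have hrec2 : (Anat (i+r+2) (i+1) : ℤ)
      = ((i:ℤ)+2) * Anat (i+r+1) (i+1) + ((r:ℤ)+1) * Anat (i+r+1) i := by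
    have h := Anat_succ_succ (i+r+1) i
    rw [show i+r+1-i = r+1 by omega] at h
    rw [show i+r+2 = i+r+1+1 from rfl, h]
    push_cast
    ring
  have ih1 := IH (i+r) (by omega) (i+1)
  have ih2 := IH (i+r) (by omega) i
  push_cast at ih1 ih2
  have ha : (0:ℤ) ≤ (Anat (i+r+1) (i+1) : ℤ) := by positivity
  have hb : (0:ℤ) ≤ (Anat (i+r+1) i : ℤ) := by positivity
  have hc1 : (0:ℤ) ≤ (i:ℤ)+3 := by positivity
  have hc2 : (0:ℤ) ≤ (r:ℤ)+2 := by positivity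
  have e1 : ((i:ℤ)+3) * (cZ ((i:ℤ)+(r:ℤ)+2) ((i:ℤ)+1) * (Anat (i+r+1) (i+1):ℤ))
      ≤ ((i:ℤ)+3) * (2 * (Anat (i+r+3) (i+1+1):ℤ)) := by
    apply mul_le_mul_of_nonneg_left _ hc1
    convert ih1 using 3 <;> push_cast <;> ring
  have e2 : ((r:ℤ)+2) * (cZ ((i:ℤ)+(r:ℤ)+2) (i:ℤ) * (Anat (i+r+1) i:ℤ))
      ≤ ((r:ℤ)+2) * (2 * (Anat (i+r+3) (i+1):ℤ)) := by
    apply mul_le_mul_of_nonneg_left _ hc2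
    convert ih2 using 3 <;> push_cast <;> ring
  have hp4 : (4:ℤ) ≤ (i:ℤ)+(r:ℤ)+1 := by
    have : 4 ≤ i+r+1 := by omega
    exact_mod_cast this
  have e3 : ((i:ℤ)+2) * cZ ((i:ℤ)+(r:ℤ)+3) ((i:ℤ)+1) ≤ ((i:ℤ)+3) * cZ ((i:ℤ)+(r:ℤ)+2) ((i:ℤ)+1) := by
    have := coeffA ((i:ℤ)+(r:ℤ)+1) i hp4
    convert this using 2 <;> ring
  have e4 : ((r:ℤ)+1) * cZ ((i:ℤ)+(r:ℤ)+3) ((i:ℤ)+1) ≤ ((r:ℤ)+2) * cZ ((i:ℤ)+(r:ℤ)+2) (i:ℤ) := by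
    have := coeffB ((i:ℤ)+(r:ℤ)+1) i hp4
    convert this using 2 <;> ring
  have goal' : cZ ((i:ℤ)+(r:ℤ)+3) ((i:ℤ)+1) * (Anat (i+r+2) (i+1) : ℤ)
      ≤ 2 * (Anat (i+r+4) (i+2) : ℤ) := by
    rw [hrec1, hrec2]
    nlinarith [mul_le_mul_of_nonneg_right e3 ha, mul_le_mul_of_nonneg_right e4 hb, e1, e2]
  rw [show i+r+1+1 = i+r+2 from rfl, show i+r+1+3 = i+r+4 from rfl,
    show i+1+1 = i+2 from rfl]
  convert goal' using 2 <;> push_cast <;> ring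


/-- descent set -/
def dset {M : ℕ} (σ : Equiv.Perm (Fin (M+1))) : Finset (Fin M) :=
  univ.filter fun i => σ i.succ < σ i.castSucc

lemma des_eq_dset {M : ℕ} (σ : Equiv.Perm (Fin (M+1))) : des σ = (dset σ).card := by
  classical
  rw [des, Nat.card_eq_fintype_card]
  rw [show (dset σ).card = Fintype.card {i : Fin M // σ i.succ < σ i.castSucc} by
    rw [Fintype.card_subtype]; rfl]
  apply Fintype.card_congr
  refine ⟨fun x => ⟨⟨(x.1 : ℕ), by obtain ⟨h, _⟩ := x.2; omega⟩, ?_⟩,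
         fun y => ⟨y.1.castSucc, ⟨by simpa using Nat.succ_lt_succ y.1.isLt, ?_⟩⟩, ?_, ?_⟩
  · obtain ⟨h, hlt⟩ := x.2
    have e1 : (⟨(x.1 : ℕ), by omega⟩ : Fin M).succ = ⟨(x.1:ℕ)+1, h⟩ := rfl
    have e2 : (⟨(x.1 : ℕ), by omega⟩ : Fin M).castSucc = x.1 := by
      ext; simp
    rw [e1, e2]
    exact hlt
  · have e1 : (⟨((y.1.castSucc : Fin (M+1)) : ℕ)+1, by simp⟩ : Fin (M+1)) = y.1.succ := by
      ext; simp
    rw [e1]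
    have e2 : y.1.castSucc = (y.1 : Fin M).castSucc := rfl
    exact y.2
  · intro x; ext; simp
  · intro y; ext; simp

/-- insert the largest value at position `j` -/
def ins {m : ℕ} (j : Fin (m+1)) (τ : Equiv.Perm (Fin m)) : Equiv.Perm (Fin (m+1)) :=
  (finSuccEquiv' j).trans ((Equiv.optionCongr τ).trans (finSuccEquiv' (Fin.last m)).symm)

lemma ins_apply_succAbove {m : ℕ} (j : Fin (m+1)) (τ : Equiv.Perm (Fin m)) (k : Fin m) :
    ins j τ (j.succAbove k) = (τ k).castSucc := by
  simp [ins, finSuccEquiv'_succAbove, finSuccEquiv'_symm_some, Fin.succAbove_last]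

lemma ins_apply_self {m : ℕ} (j : Fin (m+1)) (τ : Equiv.Perm (Fin m)) :
    ins j τ j = Fin.last m := by
  simp [ins, finSuccEquiv'_at, finSuccEquiv'_symm_none]

lemma ins_apply_lt {m : ℕ} (j : Fin (m+1)) (τ : Equiv.Perm (Fin m)) (x : Fin (m+1))
    (hx : (x : ℕ) < (j : ℕ)) :
    ins j τ x = (τ ⟨(x:ℕ), by omega⟩).castSucc := by
  have hs : j.succAbove ⟨(x:ℕ), by omega⟩ = x := by
    rw [Fin.succAbove_of_castSucc_lt]
    · ext; simp
    · simp [Fin.lt_def, hx]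
  exact (congrArg (ins j τ) hs.symm).trans (ins_apply_succAbove j τ ⟨(x:ℕ), by omega⟩)

lemma ins_apply_gt {m : ℕ} (j : Fin (m+1)) (τ : Equiv.Perm (Fin m)) (x : Fin (m+1))
    (hx : (j : ℕ) < (x : ℕ)) :
    ins j τ x = (τ ⟨(x:ℕ)-1, by omega⟩).castSucc := by
  have hs : j.succAbove ⟨(x:ℕ)-1, by omega⟩ = x := by
    rw [Fin.succAbove_of_le_castSucc]
    · ext; simp; omega
    · simp [Fin.le_def]; omega
  exact (congrArg (ins j τ) hs.symm).trans (ins_apply_succAbove j τ ⟨(x:ℕ)-1, by omega⟩)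

lemma ins_bijective (m : ℕ) :
    Function.Bijective (fun x : Fin (m+1) × Equiv.Perm (Fin m) => ins x.1 x.2) := by
  constructor
  · rintro ⟨j, τ⟩ ⟨j', τ'⟩ h
    simp only at h
    have hj : j = j' := by
      have h1 : ins j' τ' j = Fin.last m := by rw [← h, ins_apply_self]
      have h2 : ins j' τ' j' = Fin.last m := ins_apply_self j' τ'
      exact (ins j' τ').injective (h1.trans h2.symm)
    subst hj
    have hτ : τ = τ' := by
      ext k
      have := congrArg (fun σ : Equiv.Perm (Fin (m+1)) => σ (j.succAbove k)) h
      simp only [ins_apply_succAbove] at this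
      exact congrArg Fin.val (Fin.castSucc_injective m this)
    rw [hτ]
  · intro σ
    set j := σ.symm (Fin.last m) with hj
    have hσj : σ j = Fin.last m := by rw [hj]; simp
    have hne : ∀ k : Fin m, σ (j.succAbove k) ≠ Fin.last m := by
      intro k hk
      exact Fin.succAbove_ne j k (σ.injective (hk.trans hσj.symm))
    have hlt : ∀ k : Fin m, (σ (j.succAbove k) : ℕ) < m := by
      intro k
      have h1 := (σ (j.succAbove k)).isLt
      have h2 : (σ (j.succAbove k) : ℕ) ≠ m := by
        simpa [Fin.ext_iff, Fin.last] using hne k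
      omega
    set f : Fin m → Fin m := fun k => ⟨(σ (j.succAbove k) : ℕ), hlt k⟩ with hf
    have hfinj : Function.Injective f := by
      intro a b hab
      rw [hf, Fin.ext_iff] at hab
      simp only at hab
      have : σ (j.succAbove a) = σ (j.succAbove b) := by ext; exact hab
      exact Fin.succAbove_right_injective (σ.injective this)
    obtain ⟨τ, hτ⟩ : ∃ τ : Equiv.Perm (Fin m), ∀ k, τ k = f k :=
      ⟨Equiv.ofBijective f (Finite.injective_iff_bijective.mp hfinj), fun k => rfl⟩
    refine ⟨⟨j, τ⟩, ?_⟩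
    simp only
    refine Equiv.ext fun x => ?_
    rcases eq_or_ne x j with rfl | hxj
    · rw [ins_apply_self, hσj]
    · obtain ⟨k, rfl⟩ := Fin.exists_succAbove_eq hxj
      rw [ins_apply_succAbove, hτ k]
      rw [Fin.ext_iff]
      simp [hf]

section DesAnalysis

variable {N : ℕ} (j : Fin (N+2)) (τ : Equiv.Perm (Fin (N+1)))

/-- slots where inserting the max keeps the number of descents -/
def keep : Prop := ((j:ℕ) = N+1) ∨ ∃ p : Fin N, ((p:ℕ)+1 = (j:ℕ)) ∧ p ∈ dset τ

lemma mem_dset_iff {M : ℕ} (τ' : Equiv.Perm (Fin (M+1))) (q : Fin M) :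
    q ∈ dset τ' ↔ τ' q.succ < τ' q.castSucc := by
  simp [dset]

/-- the map on descent positions induced by insertion at `j` -/
def fmap : Fin N → Fin (N+1) :=
  fun p => if (p:ℕ)+1 < (j:ℕ) then p.castSucc else p.succ

lemma fmap_injective : Function.Injective (fmap j) := by
  intro p p' h
  unfold fmap at h
  have hj := j.isLt
  split_ifs at h with h1 h2 h2 <;> rw [Fin.ext_iff] at h ⊢ <;>
    simp [Fin.coe_castSucc, Fin.val_succ] at h <;> omega

lemma mem_dset_ins (i : Fin (N+1)) : i ∈ dset (ins j τ) ↔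
    ((i:ℕ) = (j:ℕ)) ∨
    (∃ h : (i:ℕ)+1 < (j:ℕ), (⟨(i:ℕ), by have := j.isLt; omega⟩ : Fin N) ∈ dset τ) ∨
    (∃ h : (j:ℕ) < (i:ℕ), (⟨(i:ℕ)-1, by have := i.isLt; omega⟩ : Fin N) ∈ dset τ) := by
  have hiN := i.isLt
  have hjN := j.isLt
  rw [mem_dset_iff]
  have hcs : ((i.castSucc : Fin (N+2)) : ℕ) = (i:ℕ) := rfl
  have hsc : ((i.succ : Fin (N+2)) : ℕ) = (i:ℕ)+1 := rfl
  rcases Nat.lt_trichotomy ((i:ℕ)+1) (j:ℕ) with hlt | heq | hgt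
  · -- i+1 < j : descent iff τ-descent at i
    rw [ins_apply_lt j τ i.castSucc (by omega), ins_apply_lt j τ i.succ (by omega)]
    rw [Fin.castSucc_lt_castSucc_iff]
    constructor
    · intro h
      refine Or.inr (Or.inl ⟨hlt, ?_⟩)
      rw [mem_dset_iff]
      convert h using 2 <;> rw [Fin.ext_iff] <;> simp
    · rintro (h | ⟨h, hd⟩ | ⟨h, hd⟩)
      · omega
      · rw [mem_dset_iff] at hd
        convert hd using 2 <;> rw [Fin.ext_iff] <;> simp
      · omega
  · -- i+1 = j : no descent here
    have : (i.succ : Fin (N+2)) = j := by rw [Fin.ext_iff, hsc, heq]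
    rw [this, ins_apply_self]
    constructor
    · intro h
      exact absurd h (Fin.not_lt.mpr (Fin.le_last _))
    · rintro (h | ⟨h, _⟩ | ⟨h, _⟩) <;> omega
  · -- i+1 > j
    rcases Nat.lt_or_ge (j:ℕ) (i:ℕ) with hgt2 | hge
    · -- i > j : descent iff τ-descent at i-1
      rw [ins_apply_gt j τ i.castSucc (by omega), ins_apply_gt j τ i.succ (by omega)]
      rw [Fin.castSucc_lt_castSucc_iff]
      constructor
      · intro h
        refine Or.inr (Or.inr ⟨hgt2, ?_⟩)
        rw [mem_dset_iff]
        convert h using 2 <;> rw [Fin.ext_iff] <;> simp <;> omega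
      · rintro (h | ⟨h, hd⟩ | ⟨h, hd⟩)
        · omega
        · omega
        · rw [mem_dset_iff] at hd
          convert hd using 2 <;> rw [Fin.ext_iff] <;> simp <;> omega
    · -- i = j : always a descent
      have hij : (i:ℕ) = (j:ℕ) := by omega
      have : (i.castSucc : Fin (N+2)) = j := by rw [Fin.ext_iff, hcs, hij]
      rw [this, ins_apply_self, ins_apply_gt j τ i.succ (by omega)]
      constructor
      · intro _; exact Or.inl hij
      · intro _; exact Fin.castSucc_lt_last _

instance keep_decidable {N : ℕ} (j : Fin (N+2)) (τ : Equiv.Perm (Fin (N+1))) :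
    Decidable (keep j τ) :=
  decidable_of_iff (((j:ℕ) = N+1) ∨ ∃ p : Fin N, ((p:ℕ)+1 = (j:ℕ)) ∧ p ∈ dset τ) Iff.rfl

end DesAnalysis

section DesCount

variable {N : ℕ} (j : Fin (N+2)) (τ : Equiv.Perm (Fin (N+1)))

lemma dset_ins_keep (hk : keep j τ) :
    dset (ins j τ) = (dset τ).image (fmap j) := by
  ext i
  rw [mem_dset_ins, Finset.mem_image]
  have hiN := i.isLt
  have hjN := j.isLt
  constructor
  · rintro (hij | ⟨h, hd⟩ | ⟨h, hd⟩)
    · rcases hk with hk | ⟨p, hp1, hp2⟩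
      · omega
      · refine ⟨p, hp2, ?_⟩
        unfold fmap
        rw [if_neg (by omega), Fin.ext_iff]
        simp <;> omega
    · refine ⟨⟨(i:ℕ), by omega⟩, hd, ?_⟩
      unfold fmap
      rw [if_pos (by simpa using h)]
      exact Fin.ext (by simp)
    · refine ⟨⟨(i:ℕ)-1, by omega⟩, hd, ?_⟩
      unfold fmap
      rw [if_neg (by simp; omega)]
      exact Fin.ext (by simp <;> omega)
  · rintro ⟨p, hp, rfl⟩
    have hpN := p.isLt
    unfold fmap
    split_ifs with h1
    · refine Or.inr (Or.inl ⟨by simpa using h1, ?_⟩)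
      convert hp using 2
      all_goals first | exact Fin.ext (by simp <;> omega) | rfl | (simp <;> omega)
    · simp only [not_lt] at h1
      rcases Nat.lt_or_ge (j:ℕ) ((p:ℕ)+1) with h2 | h2
      · refine Or.inr (Or.inr ⟨by simpa using h2, ?_⟩)
        convert hp using 2
        all_goals first | exact Fin.ext (by simp <;> omega) | rfl | (simp <;> omega)
      · exact Or.inl (by simp; omega)

lemma dset_ins_not_keep (hk : ¬ keep j τ) (hjN : (j:ℕ) < N+1) :
    dset (ins j τ) = insert ⟨(j:ℕ), hjN⟩ ((dset τ).image (fmap j)) := by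
  ext i
  rw [mem_dset_ins, Finset.mem_insert, Finset.mem_image]
  have hiN := i.isLt
  constructor
  · rintro (hij | ⟨h, hd⟩ | ⟨h, hd⟩)
    · exact Or.inl (by rw [Fin.ext_iff]; simpa using hij)
    · refine Or.inr ⟨⟨(i:ℕ), by omega⟩, hd, ?_⟩
      unfold fmap
      rw [if_pos (by simpa using h)]
      exact Fin.ext (by simp)
    · refine Or.inr ⟨⟨(i:ℕ)-1, by omega⟩, hd, ?_⟩
      unfold fmap
      rw [if_neg (by simp; omega)]
      exact Fin.ext (by simp <;> omega)
  · rintro (hij | ⟨p, hp, rfl⟩)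
    · exact Or.inl (by rw [Fin.ext_iff] at hij; simpa using hij)
    · have hpN := p.isLt
      unfold fmap
      split_ifs with h1
      · refine Or.inr (Or.inl ⟨by simpa using h1, ?_⟩)
        convert hp using 2
        all_goals first | exact Fin.ext (by simp <;> omega) | rfl | (simp <;> omega)
      · simp only [not_lt] at h1
        rcases Nat.lt_or_ge (j:ℕ) ((p:ℕ)+1) with h2 | h2
        · refine Or.inr (Or.inr ⟨by simpa using h2, ?_⟩)
          convert hp using 2
          all_goals first | exact Fin.ext (by simp <;> omega) | rfl | (simp <;> omega)
        · exfalso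
          exact hk (Or.inr ⟨p, by omega, hp⟩)

lemma des_ins (hk : keep j τ) : des (ins j τ) = des τ := by
  rw [des_eq_dset, des_eq_dset, dset_ins_keep j τ hk,
    Finset.card_image_of_injective _ (fmap_injective j)]

lemma des_ins_not (hk : ¬ keep j τ) : des (ins j τ) = des τ + 1 := by
  have hjN : (j:ℕ) < N+1 := by
    by_contra h
    push_neg at h
    have h2 : (j:ℕ) < N+2 := j.isLt
    have h3 : (j:ℕ) = N+1 := by omega
    exact hk (Or.inl h3)
  rw [des_eq_dset, des_eq_dset, dset_ins_not_keep j τ hk hjN]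
  rw [Finset.card_insert_of_notMem, Finset.card_image_of_injective _ (fmap_injective j)]
  rw [Finset.mem_image]
  rintro ⟨p, hp, hfp⟩
  have hpN := p.isLt
  unfold fmap at hfp
  rw [Fin.ext_iff] at hfp
  split_ifs at hfp with h1
  · simp at hfp; omega
  · simp at hfp
    exact hk (Or.inr ⟨p, by omega, hp⟩)

lemma card_keep : (univ.filter fun j : Fin (N+2) => keep j τ).card = des τ + 1 := by
  have hset : (univ.filter fun j : Fin (N+2) => keep j τ)
      = insert (Fin.last (N+1)) ((dset τ).image fun p : Fin N => (p.succ.castSucc : Fin (N+2))) := by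
    ext x
    rw [Finset.mem_filter, Finset.mem_insert, Finset.mem_image]
    constructor
    · rintro ⟨-, hx | ⟨p, hp1, hp2⟩⟩
      · exact Or.inl (by rw [Fin.ext_iff]; simpa using hx)
      · exact Or.inr ⟨p, hp2, by rw [Fin.ext_iff]; simpa using hp1⟩
    · rintro (rfl | ⟨p, hp, rfl⟩)
      · exact ⟨mem_univ _, Or.inl (by simp)⟩
      · exact ⟨mem_univ _, Or.inr ⟨p, by simp, hp⟩⟩
  rw [hset, Finset.card_insert_of_notMem, Finset.card_image_of_injective, des_eq_dset]
  · exact fun a b hab => Fin.succ_injective _ (Fin.castSucc_injective _ hab)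
  · rw [Finset.mem_image]
    rintro ⟨p, -, hp⟩
    rw [Fin.ext_iff] at hp
    have := p.isLt
    simp at hp
    omega

end DesCount

lemma des_le_s13 {N : ℕ} (τ : Equiv.Perm (Fin (N+1))) : des τ ≤ N := by
  rw [des_eq_dset]
  calc (dset τ).card ≤ (univ : Finset (Fin N)).card := Finset.card_le_card (Finset.subset_univ _)
  _ = N := by simp

lemma EulerZ_succ_succ (N : ℕ) :
    EulerZ (N+2) = ∑ τ : Equiv.Perm (Fin (N+1)),
      ((des τ + 1) • X^(des τ) + (N+1 - des τ) • X^(des τ+1) : Polynomial ℤ) := by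
  rw [EulerZ]
  rw [← Fintype.sum_bijective _ (ins_bijective (N+1))
    (fun x : Fin (N+2) × Equiv.Perm (Fin (N+1)) => (X^(des (ins x.1 x.2)) : Polynomial ℤ))
    (fun σ => X^(des σ)) (fun x => rfl)]
  rw [Fintype.sum_prod_type]
  rw [Finset.sum_comm]
  apply Finset.sum_congr rfl
  intro τ _
  have hstep : ∀ j : Fin (N+2), (X^(des (ins j τ)) : Polynomial ℤ)
      = if keep j τ then X^(des τ) else X^(des τ + 1) := by
    intro j
    by_cases h : keep j τ
    · rw [if_pos h, des_ins j τ h]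
    · rw [if_neg h, des_ins_not j τ h]
  calc ∑ j : Fin (N+2), (X^(des (ins j τ)) : Polynomial ℤ)
      = ∑ j : Fin (N+2), if keep j τ then (X^(des τ) : Polynomial ℤ) else X^(des τ + 1) :=
        Finset.sum_congr rfl fun j _ => hstep j
    _ = (univ.filter fun j : Fin (N+2) => keep j τ).card • (X^(des τ) : Polynomial ℤ)
        + (univ.filter fun j : Fin (N+2) => ¬ keep j τ).card • X^(des τ + 1) := by
        rw [Finset.sum_ite, Finset.sum_const, Finset.sum_const]
    _ = (des τ + 1) • (X^(des τ) : Polynomial ℤ) + (N+1 - des τ) • X^(des τ+1) := by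
        have h1 := card_keep τ
        have h2 : (univ.filter fun j : Fin (N+2) => keep j τ).card
            + (univ.filter fun j : Fin (N+2) => ¬ keep j τ).card = N+2 := by
          rw [Finset.card_filter_add_card_filter_not]
          simp
        have h3 := des_le_s13 τ
        rw [h1]
        congr 1
        have : (univ.filter fun j : Fin (N+2) => ¬ keep j τ).card = N+1 - des τ := by omega
        rw [this]

lemma coeff_EulerZ (m : ℕ) : ∀ k, (EulerZ m).coeff k = (Anat m k : ℤ) := by
  induction m using Nat.strong_induction_on with
  | _ m IH =>
  intro k
  match m with
  | 0 =>
    have h0 : ∀ σ : Equiv.Perm (Fin 0), des σ = 0 := by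
      intro σ
      have : IsEmpty {i : Fin 0 // ∃ h : (i : ℕ) + 1 < 0, σ ⟨(i : ℕ) + 1, h⟩ < σ i} :=
        ⟨fun x => by obtain ⟨h, _⟩ := x.2; omega⟩
      rw [des]
      exact Nat.card_of_isEmpty
    have : EulerZ 0 = 1 := by
      rw [EulerZ]
      rw [Finset.sum_congr rfl fun σ _ => by rw [h0 σ, pow_zero]]
      rw [Finset.sum_const, Finset.card_univ]
      simp
    rw [this]
    match k with
    | 0 => simp [Anat]
    | k+1 => simp [Anat, Polynomial.coeff_one]
  | 1 =>
    have h0 : ∀ σ : Equiv.Perm (Fin 1), des σ = 0 := by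
      intro σ
      have : IsEmpty {i : Fin 1 // ∃ h : (i : ℕ) + 1 < 1, σ ⟨(i : ℕ) + 1, h⟩ < σ i} :=
        ⟨fun x => by obtain ⟨h, _⟩ := x.2; omega⟩
      rw [des]
      exact Nat.card_of_isEmpty
    have : EulerZ 1 = 1 := by
      rw [EulerZ]
      rw [Finset.sum_congr rfl fun σ _ => by rw [h0 σ, pow_zero]]
      rw [Finset.sum_const, Finset.card_univ]
      simp
    rw [this]
    match k with
    | 0 => simp [show Anat 1 0 = 1 from rfl]
    | 0+1 => simp [Polynomial.coeff_one, show Anat 1 1 = 0 by rw [Anat_succ_succ]; simp [Anat]]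
    | k+2 => simp [Polynomial.coeff_one, show Anat 1 (k+2) = 0 by rw [Anat_succ_succ]; simp [Anat]]
  | N+2 =>
    rw [EulerZ_succ_succ, Polynomial.finset_sum_coeff]
    have hE : ∀ c : ℕ, (EulerZ (N+1)).coeff c
        = ∑ τ : Equiv.Perm (Fin (N+1)), ((X:Polynomial ℤ)^(des τ)).coeff c := by
      intro c
      rw [EulerZ, Polynomial.finset_sum_coeff]
    match k with
    | 0 =>
      have step : ∀ τ : Equiv.Perm (Fin (N+1)),
          (((des τ + 1) • X^(des τ) + (N+1 - des τ) • X^(des τ+1) : Polynomial ℤ)).coeff 0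
          = ((X:Polynomial ℤ)^(des τ)).coeff 0 := by
        intro τ
        simp only [Polynomial.coeff_add, Polynomial.coeff_smul, Polynomial.coeff_X_pow]
        rcases Nat.eq_zero_or_pos (des τ) with h | h
        · rw [h]; simp
        · rw [if_neg (show ¬ (0 = des τ) by omega), if_neg (show ¬ (0 = des τ + 1) by omega)]
          simp
      rw [Finset.sum_congr rfl fun τ _ => step τ, ← hE 0, IH (N+1) (by omega)]
      rw [Anat_zero, Anat_zero]
    | k+1 =>
      have step : ∀ τ : Equiv.Perm (Fin (N+1)),
          (((des τ + 1) • X^(des τ) + (N+1 - des τ) • X^(des τ+1) : Polynomial ℤ)).coeff (k+1)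
          = (k+2) * ((X:Polynomial ℤ)^(des τ)).coeff (k+1)
            + ((N+1-k : ℕ) : ℤ) * ((X:Polynomial ℤ)^(des τ)).coeff k := by
        intro τ
        simp only [Polynomial.coeff_add, Polynomial.coeff_smul, Polynomial.coeff_X_pow]
        by_cases h1 : des τ = k+1
        · rw [if_pos h1.symm, if_neg (by omega), if_neg (by omega), h1]
          push_cast
          simp
          ring
        · by_cases h2 : des τ = k
          · rw [if_neg (by omega), if_pos (by omega), if_pos h2.symm, h2]
            simp
          · rw [if_neg (by omega), if_neg (by omega), if_neg (by omega)]
            simp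
      rw [Finset.sum_congr rfl fun τ _ => step τ]
      rw [Finset.sum_add_distrib, ← Finset.mul_sum, ← Finset.mul_sum, ← hE (k+1), ← hE k]
      rw [IH (N+1) (by omega), IH (N+1) (by omega)]
      rw [show Anat (N+2) (k+1) = (k+2) * Anat (N+1) (k+1) + (N+1-k) * Anat (N+1) k from
        Anat_succ_succ (N+1) k]
      push_cast
      ring

theorem hpoly_coeff_nonneg (n : ℕ) (hn : 2 ≤ n) :
    (∀ i, 0 ≤ (EulerZ (n + 1) - ((n + 1).choose 2 : ℤ) • (X * EulerZ (n - 1))).coeff i) ∧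
    (∀ i ≤ n, 0 < (EulerZ (n + 1) - ((n + 1).choose 2 : ℤ) • (X * EulerZ (n - 1))).coeff i) := by
  obtain ⟨p, rfl⟩ : ∃ p, n = p + 2 := ⟨n - 2, by omega⟩
  simp only [show p+2-1 = p+1 by omega, show p+2+1 = p+3 by omega]
  -- choose number fact
  have hdvd : 2 ∣ (p+3)*(p+2) := by
    rw [mul_comm]
    exact (Nat.even_mul_succ_self (p+2)).two_dvd
  have hchoose : (p+3).choose 2 * 2 = (p+3)*(p+2) := by
    rw [Nat.choose_two_right, show p+3-1 = p+2 by omega]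
    exact Nat.div_mul_cancel hdvd
  have hchooseZ : ((p+3).choose 2 : ℤ) * 2 = ((p:ℤ)+3)*((p:ℤ)+2) := by
    exact_mod_cast congrArg (Nat.cast : ℕ → ℤ) hchoose
  -- coefficient computations
  have hXmul0 : ((X : Polynomial ℤ) * EulerZ (p+1)).coeff 0 = 0 := by
    rw [Polynomial.mul_coeff_zero, Polynomial.coeff_X_zero, zero_mul]
  have hXmul : ∀ j : ℕ, ((X : Polynomial ℤ) * EulerZ (p+1)).coeff (j+1) = (Anat (p+1) j : ℤ) := by
    intro j
    rw [Polynomial.coeff_X_mul, coeff_EulerZ]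
  have hcoeff : ∀ i : ℕ, (EulerZ (p+3) - ((p+3).choose 2 : ℤ) • (X * EulerZ (p+1))).coeff i
      = (Anat (p+3) i : ℤ) - ((p+3).choose 2 : ℤ) * ((X : Polynomial ℤ) * EulerZ (p+1)).coeff i := by
    intro i
    rw [Polynomial.coeff_sub, Polynomial.coeff_smul, smul_eq_mul, coeff_EulerZ]
  -- key inequality specialized
  have key : ∀ j : ℕ, (((p:ℤ)-2*j)^2 + 2*(p:ℤ) + 2) * (Anat (p+1) j : ℤ)
      ≤ 2 * (Anat (p+3) (j+1) : ℤ) - (((p:ℤ)+3)*((p:ℤ)+2)) * (Anat (p+1) j : ℤ) := by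
    intro j
    have h := KZ p j
    unfold cZ at h
    nlinarith [h]
  have hB0 : ∀ j : ℕ, (0:ℤ) ≤ (Anat (p+1) j : ℤ) := fun j => by positivity
  constructor
  · intro i
    match i with
    | 0 =>
      rw [hcoeff 0, hXmul0, mul_zero, sub_zero, Anat_zero]
      norm_num
    | j+1 =>
      rw [hcoeff (j+1), hXmul j]
      have hk := key j
      nlinarith [hk, sq_nonneg ((p:ℤ)-2*(j:ℤ)), hB0 j, hchooseZ]
  · intro i hi
    match i with
    | 0 =>
      rw [hcoeff 0, hXmul0, mul_zero, sub_zero, Anat_zero]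
      norm_num
    | j+1 =>
      rw [hcoeff (j+1), hXmul j]
      have hj : j ≤ p+1 := by omega
      rcases Nat.lt_or_ge j (p+1) with hjp | hjp
      · -- 1 ≤ i ≤ n-1 : strictly positive with room
        have hB1 : (1:ℤ) ≤ (Anat (p+1) j : ℤ) := by exact_mod_cast Anat_pos (p+1) j hjp
        have hk := key j
        have hcoef : (2:ℤ) ≤ ((p:ℤ)-2*j)^2 + 2*(p:ℤ) + 2 := by
          nlinarith [sq_nonneg ((p:ℤ)-2*(j:ℤ))]
        have hprod : (2:ℤ) * 1 ≤ (((p:ℤ)-2*j)^2 + 2*(p:ℤ) + 2) * (Anat (p+1) j : ℤ) :=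
          mul_le_mul hcoef hB1 (by norm_num) (by nlinarith [sq_nonneg ((p:ℤ)-2*(j:ℤ))])
        nlinarith [hk, hprod, hchooseZ, hB0 j]
      · -- i = n : the subtracted term vanishes
        have hj' : j = p+1 := by omega
        subst hj'
        rw [Anat_vanish (p+1) (p+1) (by omega) le_rfl]
        have hA : 1 ≤ Anat (p+3) (p+1+1) := Anat_pos (p+3) (p+2) (by omega)
        push_cast
        have : (1:ℤ) ≤ (Anat (p+3) (p+1+1) : ℤ) := by exact_mod_cast hA
        linarith
end

section
/- For n ≥ 2, Σ_{A ⊆ S, s_{n-1} ∉ A} ((n+1)!/|W_A|)(t-1)^{|A|} = (n(n+1)/2)(t+1) E_{n-1}(t), where S = {s_1,...,s_n} are the simple transpositions of S_{n+1}. -/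
set_option maxHeartbeats 1000000

open Polynomial Finset

variable {m : ℕ}

/-- block index of a position, given a set `B` of "glue" edges -/
def blk (B : Finset (Fin m)) (x : Fin (m+1)) : ℕ :=
  (univ.filter (fun j : Fin m => (j : ℕ) < (x : ℕ) ∧ j ∉ B)).card

lemma blk_mono (B : Finset (Fin m)) : Monotone (blk B) := by
  intro x y hxy
  apply Finset.card_le_card
  intro j hj
  simp only [Finset.mem_filter] at *
  exact ⟨hj.1, lt_of_lt_of_le hj.2.1 hxy, hj.2.2⟩

lemma blk_succ (B : Finset (Fin m)) (i : Fin m) :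
    blk B i.succ = blk B i.castSucc + (if i ∈ B then 0 else 1) := by
  unfold blk
  by_cases hi : i ∈ B
  · simp only [hi, if_true, add_zero]
    congr 1
    ext j
    simp only [Finset.mem_filter, Fin.coe_castSucc, Fin.val_succ]
    constructor
    · rintro ⟨hu, hj, hB⟩
      refine ⟨hu, ?_, hB⟩
      rcases Nat.lt_succ_iff_lt_or_eq.mp hj with h | h
      · exact h
      · exfalso; exact hB (by rwa [show j = i from Fin.ext h])
    · rintro ⟨hu, hj, hB⟩; exact ⟨hu, by omega, hB⟩
  · simp only [hi, if_false]
    have : (univ.filter (fun j : Fin m => (j : ℕ) < (i.succ : ℕ) ∧ j ∉ B))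
        = insert i (univ.filter (fun j : Fin m => (j : ℕ) < (i.castSucc : ℕ) ∧ j ∉ B)) := by
      ext j
      simp only [Finset.mem_filter, Finset.mem_insert, Fin.coe_castSucc, Fin.val_succ,
        Finset.mem_univ, true_and]
      constructor
      · rintro ⟨hj, hB⟩
        rcases Nat.lt_succ_iff_lt_or_eq.mp hj with h | h
        · exact Or.inr ⟨h, hB⟩
        · exact Or.inl (Fin.ext h)
      · rintro (rfl | ⟨hj, hB⟩)
        · exact ⟨Nat.lt_succ_self _, hi⟩
        · exact ⟨by omega, hB⟩
    rw [this, Finset.card_insert_of_notMem (by simp)]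

lemma blk_succ_eq_iff (B : Finset (Fin m)) (i : Fin m) :
    blk B i.castSucc = blk B i.succ ↔ i ∈ B := by
  rw [blk_succ]
  by_cases hi : i ∈ B <;> simp [hi]

lemma lt_of_blk_lt {B : Finset (Fin m)} {x y : Fin (m+1)} (h : blk B x < blk B y) : x < y := by
  by_contra hxy
  exact absurd (blk_mono B (not_lt.mp hxy)) (not_le.mpr h)

lemma blk_squeeze {B : Finset (Fin m)} {x y z : Fin (m+1)} (hxy : blk B x = blk B y)
    (h1 : x ≤ z) (h2 : z ≤ y) : blk B z = blk B x :=
  le_antisymm (hxy ▸ blk_mono B h2) (blk_mono B h1)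

/-- if x,y are in the same block, every edge between them is in B -/
lemma mem_of_between {B : Finset (Fin m)} {x y : Fin (m+1)} (hxy : blk B x = blk B y)
    (i : Fin m) (h1 : (x : ℕ) ≤ (i : ℕ)) (h2 : (i : ℕ) + 1 ≤ (y : ℕ)) : i ∈ B := by
  rw [← blk_succ_eq_iff B i]
  have hc : blk B i.castSucc = blk B x :=
    blk_squeeze hxy (by rwa [Fin.le_def, Fin.coe_castSucc])
      (by rw [Fin.le_def, Fin.coe_castSucc]; omega)
  have hs : blk B i.succ = blk B x :=
    blk_squeeze hxy (by rw [Fin.le_def, Fin.val_succ]; omega)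
      (by rwa [Fin.le_def, Fin.val_succ])
  rw [hc, hs]

/-- the subgroup of block-preserving permutations -/
def Pgrp (B : Finset (Fin m)) : Subgroup (Equiv.Perm (Fin (m+1))) where
  carrier := {σ | ∀ x, blk B (σ x) = blk B x}
  one_mem' := fun x => rfl
  mul_mem' := by
    intro σ τ hσ hτ x
    simpa [hτ x] using hσ (τ x)
  inv_mem' := by
    intro σ hσ x
    have := hσ (σ⁻¹ x)
    simpa using this.symm

lemma swap_mem_Pgrp {B : Finset (Fin m)} {i : Fin m} (hi : i ∈ B) :
    Equiv.swap i.castSucc i.succ ∈ Pgrp B := by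
  intro x
  have hcs : blk B i.castSucc = blk B i.succ := (blk_succ_eq_iff B i).mpr hi
  rcases eq_or_ne x i.castSucc with rfl | h1
  · rw [Equiv.swap_apply_left]; exact hcs.symm
  rcases eq_or_ne x i.succ with rfl | h2
  · rw [Equiv.swap_apply_right]; exact hcs
  · rw [Equiv.swap_apply_of_ne_of_ne h1 h2]

def inversions (σ : Equiv.Perm (Fin (m+1))) : ℕ :=
  (univ.filter fun p : Fin (m+1) × Fin (m+1) => p.1 < p.2 ∧ σ p.2 < σ p.1).card

lemma inversions_mul_swap_lt {σ : Equiv.Perm (Fin (m+1))} {i : Fin m}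
    (h : σ i.succ < σ i.castSucc) :
    inversions (σ * Equiv.swap i.castSucc i.succ) < inversions σ := by
  classical
  set s := Equiv.swap i.castSucc i.succ with hs
  set c := i.castSucc
  set d := i.succ
  have hcd : (d : ℕ) = (c : ℕ) + 1 := by simp [c, d]
  have hclt : c < d := by rw [Fin.lt_def]; omega
  -- image of the inversion set of σ * s under the swap map
  have himg : (univ.filter fun p : Fin (m+1) × Fin (m+1) =>
        p.1 < p.2 ∧ (σ * s) p.2 < (σ * s) p.1).image (fun p => (s p.1, s p.2))
      ⊂ univ.filter fun p : Fin (m+1) × Fin (m+1) => p.1 < p.2 ∧ σ p.2 < σ p.1 := by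
    rw [Finset.ssubset_iff_of_subset]
    · refine ⟨(c, d), ?_, ?_⟩
      · simp only [Finset.mem_filter, Finset.mem_univ, true_and]
        exact ⟨hclt, h⟩
      · intro hmem
        rw [Finset.mem_image] at hmem
        obtain ⟨p, hp, hpe⟩ := hmem
        rw [Finset.mem_filter] at hp
        have h1 : s p.1 = c := congrArg Prod.fst hpe
        have h2 : s p.2 = d := congrArg Prod.snd hpe
        have hp1 : p.1 = s c := by rw [← h1, Equiv.swap_apply_self]
        have hp2 : p.2 = s d := by rw [← h2, Equiv.swap_apply_self]
        rw [Equiv.swap_apply_left] at hp1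
        rw [Equiv.swap_apply_right] at hp2
        have := hp.2.1
        rw [hp1, hp2] at this
        exact absurd this (not_lt.mpr hclt.le)
    · intro q hq
      rw [Finset.mem_image] at hq
      obtain ⟨p, hp, rfl⟩ := hq
      rw [Finset.mem_filter] at hp ⊢
      obtain ⟨-, hlt, hinv⟩ := hp
      have hinv' : σ (s p.2) < σ (s p.1) := hinv
      refine ⟨Finset.mem_univ _, ?_, hinv'⟩
      -- need : s p.1 < s p.2
      have hpne : ¬ (p.1 = c ∧ p.2 = d) := by
        rintro ⟨e1, e2⟩
        rw [e1, e2] at hinv'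
        rw [Equiv.swap_apply_left, Equiv.swap_apply_right] at hinv'
        exact absurd h (not_lt.mpr hinv'.le)
      dsimp only
      rcases eq_or_ne p.1 c with h1c | h1c
      · -- p.2 ≠ d, p.2 > c so p.2 > d i.e. p.2 ∉ {c,d}
        have h2d : p.2 ≠ d := fun hh => hpne ⟨h1c, hh⟩
        have h2c : p.2 ≠ c := by rw [← h1c]; exact ne_of_gt hlt
        rw [h1c, Equiv.swap_apply_left, Equiv.swap_apply_of_ne_of_ne h2c h2d]
        rw [Fin.lt_def] at hlt ⊢
        rw [h1c] at hlt
        have : (p.2 : ℕ) ≠ (d : ℕ) := fun hh => h2d (Fin.ext hh)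
        omega
      rcases eq_or_ne p.1 d with h1d | h1d
      · have h2c : p.2 ≠ c := by
          rw [← h1d] at hclt; exact ne_of_gt (lt_trans hclt hlt)
        have h2d : p.2 ≠ d := by rw [← h1d]; exact ne_of_gt hlt
        rw [h1d, Equiv.swap_apply_right, Equiv.swap_apply_of_ne_of_ne h2c h2d]
        rw [Fin.lt_def] at hlt ⊢
        rw [h1d] at hlt
        omega
      rcases eq_or_ne p.2 c with h2c | h2c
      · rw [h2c, Equiv.swap_apply_left, Equiv.swap_apply_of_ne_of_ne h1c h1d]
        rw [Fin.lt_def] at hlt ⊢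
        rw [h2c] at hlt
        have : (p.1 : ℕ) ≠ (c : ℕ) := fun hh => h1c (Fin.ext hh)
        omega
      rcases eq_or_ne p.2 d with h2d | h2d
      · rw [h2d, Equiv.swap_apply_right, Equiv.swap_apply_of_ne_of_ne h1c h1d]
        rw [Fin.lt_def] at hlt ⊢
        rw [h2d] at hlt
        have : (p.1 : ℕ) ≠ (c : ℕ) := fun hh => h1c (Fin.ext hh)
        have hd : (p.1 : ℕ) ≠ (d : ℕ) := fun hh => h1d (Fin.ext hh)
        omega
      · rw [Equiv.swap_apply_of_ne_of_ne h1c h1d, Equiv.swap_apply_of_ne_of_ne h2c h2d]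
        exact hlt
  have hinj : Function.Injective (fun p : Fin (m+1) × Fin (m+1) => (s p.1, s p.2)) := by
    intro p q hpq
    rw [Prod.ext_iff] at hpq
    exact Prod.ext (s.injective hpq.1) (s.injective hpq.2)
  calc inversions (σ * s)
      = ((univ.filter fun p : Fin (m+1) × Fin (m+1) =>
          p.1 < p.2 ∧ (σ * s) p.2 < (σ * s) p.1).image (fun p => (s p.1, s p.2))).card := by
        rw [Finset.card_image_of_injective _ hinj]; rfl
    _ < _ := Finset.card_lt_card himg

lemma strictMono_perm_eq_one {σ : Equiv.Perm (Fin (m+1))} (h : StrictMono σ) : σ = 1 := by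
  ext x
  have he := Subsingleton.elim (h.orderIsoOfSurjective σ σ.surjective) (OrderIso.refl _)
  have hx : (h.orderIsoOfSurjective σ σ.surjective) x = x := by rw [he]; rfl
  exact congrArg Fin.val hx

lemma Pgrp_le_Wsub (B : Finset (Fin m)) : Pgrp B ≤ Wsub B := by
  intro σ hσ
  -- strong induction on inversions
  generalize hk : inversions σ = k
  induction k using Nat.strong_induction_on generalizing σ with
  | _ k ih =>
    by_cases hdesc : ∃ i : Fin m, σ i.succ < σ i.castSucc
    · obtain ⟨i, hi⟩ := hdesc
      have hiB : i ∈ B := by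
        by_contra hiB
        have h1 : blk B i.castSucc < blk B i.succ := by
          rw [blk_succ B i, if_neg hiB]; omega
        have h2 : blk B (σ i.castSucc) < blk B (σ i.succ) := by
          rw [hσ i.castSucc, hσ i.succ]; exact h1
        exact absurd (lt_of_blk_lt h2) (not_lt.mpr hi.le)
      set s := Equiv.swap i.castSucc i.succ with hs
      have hswap : s ∈ Pgrp B := swap_mem_Pgrp hiB
      have hσ' : σ * s ∈ Pgrp B := (Pgrp B).mul_mem hσ hswap
      have hlt : inversions (σ * s) < k := hk ▸ inversions_mul_swap_lt hi
      have hmem : σ * s ∈ Wsub B := ih _ hlt hσ' rfl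
      have hsW : s ∈ Wsub B :=
        Subgroup.subset_closure ⟨i, by simpa using hiB, rfl⟩
      have : σ = (σ * s) * s := by
        rw [mul_assoc, hs, Equiv.swap_mul_self, mul_one]
      rw [this]
      exact (Wsub B).mul_mem hmem hsW
    · push_neg at hdesc
      have : StrictMono σ := by
        rw [Fin.strictMono_iff_lt_succ]
        intro i
        rcases lt_or_eq_of_le (hdesc i) with h | h
        · exact h
        · exact absurd (σ.injective h) (by simp [Fin.ext_iff])
      rw [strictMono_perm_eq_one this]
      exact (Wsub B).one_mem

lemma Wsub_le_Pgrp (B : Finset (Fin m)) : Wsub B ≤ Pgrp B := by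
  rw [Wsub, Subgroup.closure_le]
  rintro σ ⟨i, hi, rfl⟩
  exact swap_mem_Pgrp (by simpa using hi)

lemma Wsub_eq_Pgrp (B : Finset (Fin m)) : Wsub B = Pgrp B :=
  le_antisymm (Wsub_le_Pgrp B) (Pgrp_le_Wsub B)

section Factor

/-- descent set of a permutation of `Fin (m+1)`, as a subset of `Fin m` -/
def DesSet (σ : Equiv.Perm (Fin (m+1))) : Finset (Fin m) :=
  univ.filter fun i => σ i.succ < σ i.castSucc

/-- the permutations whose descent set contains `B` -/
def Dset (B : Finset (Fin m)) : Finset (Equiv.Perm (Fin (m+1))) :=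
  univ.filter fun σ => B ⊆ DesSet σ

/-- sorting key: primarily by block, then by decreasing value of `σ` -/
def skey (B : Finset (Fin m)) (σ : Equiv.Perm (Fin (m+1))) (x : Fin (m+1)) : ℕ :=
  (m + 2) * blk B x + (m - (σ x : ℕ))

lemma skey_div (B : Finset (Fin m)) (σ : Equiv.Perm (Fin (m+1))) (x : Fin (m+1)) :
    skey B σ x / (m + 2) = blk B x := by
  have h : m - (σ x : ℕ) < m + 2 := by omega
  rw [skey, Nat.mul_add_div (by omega), Nat.div_eq_of_lt h, add_zero]

lemma skey_inj (B : Finset (Fin m)) (σ : Equiv.Perm (Fin (m+1))) :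
    Function.Injective (skey B σ) := by
  intro x y h
  have hdiv : blk B x = blk B y := by
    rw [← skey_div B σ x, ← skey_div B σ y, h]
  have hmod : m - (σ x : ℕ) = m - (σ y : ℕ) := by
    have := h
    rw [skey, skey, hdiv] at this
    omega
  have hx : (σ x : ℕ) ≤ m := Fin.is_le _
  have hy : (σ y : ℕ) ≤ m := Fin.is_le _
  have : σ x = σ y := Fin.ext (by omega)
  exact σ.injective this

lemma mem_Dset_iff {B : Finset (Fin m)} {σ : Equiv.Perm (Fin (m+1))} :
    σ ∈ Dset B ↔ ∀ i ∈ B, σ i.succ < σ i.castSucc := by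
  simp [Dset, DesSet, Finset.subset_iff]

lemma dset_anti {B : Finset (Fin m)} {u : Equiv.Perm (Fin (m+1))} (hu : u ∈ Dset B) :
    ∀ (k : ℕ) (x y : Fin (m+1)), (y : ℕ) = (x : ℕ) + k → blk B x = blk B y → u y ≤ u x := by
  intro k
  induction k with
  | zero =>
    intro x y h _
    have : x = y := Fin.ext (by omega)
    rw [this]
  | succ k ih =>
    intro x y h hb
    have hxm : (x : ℕ) < m := by have := y.isLt; omega
    set i : Fin m := ⟨(x : ℕ), hxm⟩ with hi
    have hc : i.castSucc = x := Fin.ext rfl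
    have hsv : (i.succ : ℕ) = (x : ℕ) + 1 := rfl
    have hbz : blk B i.succ = blk B x := by
      refine blk_squeeze hb ?_ ?_
      · rw [Fin.le_def, hsv]; omega
      · rw [Fin.le_def, hsv]; omega
    have hiB : i ∈ B := by
      rw [← blk_succ_eq_iff B i, hc, hbz]
    have hdesc : u i.succ < u i.castSucc := (mem_Dset_iff.mp hu) i hiB
    have hrec : u y ≤ u i.succ := ih i.succ y (by omega) (by rw [hbz, hb])
    exact le_trans hrec (le_of_lt (by rwa [hc] at hdesc))

lemma sort_mem_Pgrp (B : Finset (Fin m)) (σ : Equiv.Perm (Fin (m+1))) :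
    Tuple.sort (skey B σ) ∈ Pgrp B := by
  set τ := Tuple.sort (skey B σ) with hτ
  have hmono : Monotone (skey B σ ∘ τ) := Tuple.monotone_sort _
  have hblk : Monotone (blk B ∘ τ) := by
    intro x y hxy
    have := hmono hxy
    simp only [Function.comp_apply] at this ⊢
    rw [← skey_div B σ (τ x), ← skey_div B σ (τ y)]
    exact Nat.div_le_div_right this
  have hone : Monotone (blk B ∘ ⇑(1 : Equiv.Perm (Fin (m+1)))) := by
    simpa using blk_mono B
  have := Tuple.unique_monotone (f := blk B) (σ := τ) (τ := (1 : Equiv.Perm (Fin (m+1))))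
    hblk hone
  intro x
  have := congrFun this x
  simpa using this

lemma mul_sort_mem_Dset (B : Finset (Fin m)) (σ : Equiv.Perm (Fin (m+1))) :
    σ * Tuple.sort (skey B σ) ∈ Dset B := by
  set τ := Tuple.sort (skey B σ) with hτ
  rw [mem_Dset_iff]
  intro i hi
  have hmono : Monotone (skey B σ ∘ τ) := Tuple.monotone_sort _
  have hcs : i.castSucc ≤ i.succ := (Fin.castSucc_lt_succ (i := i)).le
  have hle : skey B σ (τ i.castSucc) ≤ skey B σ (τ i.succ) := hmono hcs
  have hne : τ i.castSucc ≠ τ i.succ := fun hh =>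
    absurd (τ.injective hh) (Fin.castSucc_lt_succ (i := i)).ne
  have hklt : skey B σ (τ i.castSucc) < skey B σ (τ i.succ) :=
    lt_of_le_of_ne hle (fun hh => hne (skey_inj B σ hh))
  have hpg : τ ∈ Pgrp B := sort_mem_Pgrp B σ
  have hbeq : blk B (τ i.castSucc) = blk B (τ i.succ) := by
    rw [hpg i.castSucc, hpg i.succ]
    exact (blk_succ_eq_iff B i).mpr hi
  rw [skey, skey, hbeq] at hklt
  have h1 : (σ (τ i.castSucc) : ℕ) ≤ m := Fin.is_le _
  have h2 : (σ (τ i.succ) : ℕ) ≤ m := Fin.is_le _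
  have h3 : (σ (τ i.succ) : ℕ) < (σ (τ i.castSucc) : ℕ) := by omega
  show σ (τ i.succ) < σ (τ i.castSucc)
  rw [Fin.lt_def]
  exact h3

lemma sort_eq_of_factor {B : Finset (Fin m)} {u w : Equiv.Perm (Fin (m+1))}
    (hu : u ∈ Dset B) (hw : w ∈ Pgrp B) :
    Tuple.sort (skey B (u * w)) = w⁻¹ := by
  symm
  rw [Tuple.eq_sort_iff]
  have hwinv : w⁻¹ ∈ Pgrp B := (Pgrp B).inv_mem hw
  have hkey : ∀ x, skey B (u * w) (w⁻¹ x) = (m + 2) * blk B x + (m - (u x : ℕ)) := by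
    intro x
    rw [skey]
    have h1 : blk B (w⁻¹ x) = blk B x := hwinv x
    have h2 : (u * w) (w⁻¹ x) = u x := by
      simp [Equiv.Perm.mul_apply]
    rw [h1, h2]
  constructor
  · intro x y hxy
    simp only [Function.comp_apply]
    rw [hkey x, hkey y]
    have hble : blk B x ≤ blk B y := blk_mono B hxy
    rcases lt_or_eq_of_le hble with hlt | heq
    · have hux : m - (u x : ℕ) < m + 2 := by omega
      refine le_of_lt ?_
      calc (m + 2) * blk B x + (m - (u x : ℕ))
          < (m + 2) * blk B x + (m + 2) := Nat.add_lt_add_left hux _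
        _ = (m + 2) * (blk B x + 1) := by ring
        _ ≤ (m + 2) * blk B y := Nat.mul_le_mul_left _ (by omega)
        _ ≤ (m + 2) * blk B y + (m - (u y : ℕ)) := Nat.le_add_right _ _
    · have huy : u y ≤ u x := by
        have hk : (y : ℕ) = (x : ℕ) + ((y : ℕ) - (x : ℕ)) := by
          rw [Fin.le_def] at hxy; omega
        exact dset_anti hu _ x y hk heq
      rw [heq]
      have h1 : (u y : ℕ) ≤ (u x : ℕ) := huy
      omega
  · intro i j hij hkeq
    exfalso
    have := skey_inj B (u * w) hkeq
    have : i = j := w⁻¹.injective this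
    exact absurd this hij.ne

noncomputable def factorEquiv (B : Finset (Fin m)) :
    (↥(Dset B) × ↥(Pgrp B)) ≃ Equiv.Perm (Fin (m+1)) := by
  apply Equiv.ofBijective (fun p => (p.1 : Equiv.Perm (Fin (m+1))) * (p.2 : Equiv.Perm (Fin (m+1))))
  constructor
  · rintro ⟨⟨u, hu⟩, ⟨w, hw⟩⟩ ⟨⟨u', hu'⟩, ⟨w', hw'⟩⟩ h
    simp only at h
    have h1 := sort_eq_of_factor hu hw
    have h2 := sort_eq_of_factor hu' hw'
    rw [h] at h1
    rw [h1] at h2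
    have hww : w = w' := by
      have := congrArg (·⁻¹) h2
      simpa using this
    subst hww
    have huu : u = u' := mul_right_cancel h
    subst huu
    rfl
  · intro σ
    refine ⟨⟨⟨σ * Tuple.sort (skey B σ), mul_sort_mem_Dset B σ⟩,
      ⟨(Tuple.sort (skey B σ))⁻¹, (Pgrp B).inv_mem (sort_mem_Pgrp B σ)⟩⟩, ?_⟩
    simp [mul_assoc]

lemma card_Dset_mul_card_Pgrp (B : Finset (Fin m)) :
    (Dset B).card * Nat.card (Pgrp B) = (m + 1).factorial := by
  have h := Nat.card_congr (factorEquiv B)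
  rw [Nat.card_prod] at h
  rw [Nat.card_eq_finsetCard] at h
  rw [h]
  rw [Nat.card_eq_fintype_card, Fintype.card_perm, Fintype.card_fin]

end Factor

lemma ratio_eq (B : Finset (Fin m)) :
    (((m + 1).factorial : ℚ) / (Nat.card (Pgrp B) : ℚ)) = ((Dset B).card : ℚ) := by
  have h := card_Dset_mul_card_Pgrp B
  have hpos : 0 < Nat.card (Pgrp B) := Nat.card_pos
  have hne : (Nat.card (Pgrp B) : ℚ) ≠ 0 := by positivity
  rw [div_eq_iff hne]
  exact_mod_cast congrArg (Nat.cast : ℕ → ℚ) h.symm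

lemma pow_card_eq_sum_powerset (s : Finset (Fin m)) :
    ∑ B ∈ s.powerset, ((X : ℚ[X]) - 1) ^ B.card = X ^ s.card := by
  have h := Finset.prod_add (fun _ : Fin m => (X : ℚ[X]) - 1) (fun _ : Fin m => (1 : ℚ[X])) s
  simp only [Finset.prod_const, Finset.prod_const_one, one_pow, mul_one] at h
  rw [sub_add_cancel] at h
  exact h.symm

lemma main_sum (C : Finset (Fin m)) :
    ∑ B ∈ C.powerset, ((Dset B).card : ℚ) • ((X : ℚ[X]) - 1) ^ B.card
      = ∑ σ : Equiv.Perm (Fin (m+1)), (X : ℚ[X]) ^ (DesSet σ ∩ C).card := by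
  have h1 : ∀ B : Finset (Fin m), ((Dset B).card : ℚ) • ((X : ℚ[X]) - 1) ^ B.card
      = ∑ _σ ∈ Dset B, ((X : ℚ[X]) - 1) ^ B.card := by
    intro B
    rw [Finset.sum_const, Nat.cast_smul_eq_nsmul]
  calc ∑ B ∈ C.powerset, ((Dset B).card : ℚ) • ((X : ℚ[X]) - 1) ^ B.card
      = ∑ B ∈ C.powerset, ∑ _σ ∈ Dset B, ((X : ℚ[X]) - 1) ^ B.card :=
        Finset.sum_congr rfl (fun B _ => h1 B)
    _ = ∑ B ∈ C.powerset, ∑ σ : Equiv.Perm (Fin (m+1)),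
          if B ⊆ DesSet σ then ((X : ℚ[X]) - 1) ^ B.card else 0 := by
        refine Finset.sum_congr rfl (fun B _ => ?_)
        rw [Dset, Finset.sum_filter]
    _ = ∑ σ : Equiv.Perm (Fin (m+1)), ∑ B ∈ C.powerset,
          if B ⊆ DesSet σ then ((X : ℚ[X]) - 1) ^ B.card else 0 := Finset.sum_comm
    _ = ∑ σ : Equiv.Perm (Fin (m+1)), (X : ℚ[X]) ^ (DesSet σ ∩ C).card := by
        refine Finset.sum_congr rfl (fun σ _ => ?_)
        rw [← Finset.sum_filter]
        have hps : C.powerset.filter (fun B => B ⊆ DesSet σ) = (DesSet σ ∩ C).powerset := by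
          ext B
          simp only [Finset.mem_filter, Finset.mem_powerset, Finset.subset_inter_iff]
          tauto
        rw [hps, pow_card_eq_sum_powerset]

section Std

variable (r : ℕ)

lemma pairSet_card' {r : ℕ} {a b : Fin (r+3)} (hab : a ≠ b) :
    ({a, b}ᶜ : Finset (Fin (r+3))).card = r + 1 := by
  rw [Finset.card_compl, Finset.card_pair hab]
  simp

def stdFun (a b : Fin (r+3)) (hab : a ≠ b) (τ : Equiv.Perm (Fin (r+1))) :
    Fin (r+3) → Fin (r+3) := fun x =>
  if h : (x : ℕ) < r + 1
    then (({a, b}ᶜ : Finset (Fin (r+3))).orderIsoOfFin (pairSet_card' hab) (τ ⟨(x : ℕ), h⟩) :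
      Fin (r+3))
    else if (x : ℕ) = r + 1 then a else b

lemma stdFun_inj (a b : Fin (r+3)) (hab : a ≠ b) (τ : Equiv.Perm (Fin (r+1))) :
    Function.Injective (stdFun r a b hab τ) := by
  have hmem : ∀ j : Fin (r+1),
      ((({a, b}ᶜ : Finset (Fin (r+3))).orderIsoOfFin (pairSet_card' hab) j : Fin (r+3)))
        ∈ ({a, b}ᶜ : Finset (Fin (r+3))) := fun j =>
    (({a, b}ᶜ : Finset (Fin (r+3))).orderIsoOfFin (pairSet_card' hab) j).2
  have hab_mem : ∀ x : Fin (r+3), ¬ ((x : ℕ) < r + 1) →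
      stdFun r a b hab τ x ∈ ({a, b} : Finset (Fin (r+3))) := by
    intro x hx
    rw [stdFun, dif_neg hx]
    split_ifs <;> simp
  intro x y h
  by_cases hx : (x : ℕ) < r + 1 <;> by_cases hy : (y : ℕ) < r + 1
  · rw [stdFun, dif_pos hx] at h
    conv_rhs at h => rw [stdFun, dif_pos hy]
    have h2 := Subtype.coe_injective h
    have h3 := (({a, b}ᶜ : Finset (Fin (r+3))).orderIsoOfFin
      (pairSet_card' hab)).toEquiv.injective h2
    have h4 := τ.injective h3
    have h5 : ((⟨(x : ℕ), hx⟩ : Fin (r+1)) : ℕ) = ((⟨(y : ℕ), hy⟩ : Fin (r+1)) : ℕ) := congrArg Fin.val h4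
    exact Fin.ext h5
  · exfalso
    have h1 := hmem (τ ⟨(x : ℕ), hx⟩)
    rw [Finset.mem_compl] at h1
    apply h1
    have heq : stdFun r a b hab τ x
        = (({a, b}ᶜ : Finset (Fin (r+3))).orderIsoOfFin (pairSet_card' hab)
            (τ ⟨(x : ℕ), hx⟩) : Fin (r+3)) := by
      rw [stdFun, dif_pos hx]
    rw [← heq, h]
    exact hab_mem y hy
  · exfalso
    have h1 := hmem (τ ⟨(y : ℕ), hy⟩)
    rw [Finset.mem_compl] at h1
    apply h1
    have heq : stdFun r a b hab τ y
        = (({a, b}ᶜ : Finset (Fin (r+3))).orderIsoOfFin (pairSet_card' hab)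
            (τ ⟨(y : ℕ), hy⟩) : Fin (r+3)) := by
      rw [stdFun, dif_pos hy]
    rw [← heq, ← h]
    exact hab_mem x hx
  · rw [stdFun, dif_neg hx] at h
    conv_rhs at h => rw [stdFun, dif_neg hy]
    have hx3 := x.isLt
    have hy3 := y.isLt
    split_ifs at h with h1 h2 h2
    · exact Fin.ext (by omega)
    · exact absurd h hab
    · exact absurd h.symm hab
    · exact Fin.ext (by omega)

noncomputable def stdPerm (a b : Fin (r+3)) (hab : a ≠ b) (τ : Equiv.Perm (Fin (r+1))) :
    Equiv.Perm (Fin (r+3)) :=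
  Equiv.ofBijective (stdFun r a b hab τ)
    ((Finite.injective_iff_bijective).mp (stdFun_inj r a b hab τ))

lemma stdPerm_apply_lt (a b : Fin (r+3)) (hab : a ≠ b) (τ : Equiv.Perm (Fin (r+1)))
    (x : Fin (r+3)) (h : (x : ℕ) < r + 1) :
    stdPerm r a b hab τ x
      = (({a, b}ᶜ : Finset (Fin (r+3))).orderIsoOfFin (pairSet_card' hab) (τ ⟨(x : ℕ), h⟩) :
          Fin (r+3)) := by
  show stdFun r a b hab τ x = _
  rw [stdFun, dif_pos h]

lemma stdPerm_apply_mid (a b : Fin (r+3)) (hab : a ≠ b) (τ : Equiv.Perm (Fin (r+1)))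
    (x : Fin (r+3)) (h : (x : ℕ) = r + 1) :
    stdPerm r a b hab τ x = a := by
  show stdFun r a b hab τ x = _
  rw [stdFun, dif_neg (by omega), if_pos h]

lemma stdPerm_apply_top (a b : Fin (r+3)) (hab : a ≠ b) (τ : Equiv.Perm (Fin (r+1)))
    (x : Fin (r+3)) (h : (x : ℕ) = r + 2) :
    stdPerm r a b hab τ x = b := by
  show stdFun r a b hab τ x = _
  rw [stdFun, dif_neg (by omega), if_neg (by omega)]

lemma des_eq_sum (τ : Equiv.Perm (Fin (r+1))) :
    des τ = ∑ j : Fin r,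
      if τ ⟨(j : ℕ) + 1, by omega⟩ < τ ⟨(j : ℕ), by omega⟩ then 1 else 0 := by
  classical
  rw [des, Nat.card_eq_fintype_card, Fintype.card_subtype, Finset.card_filter,
    Fin.sum_univ_castSucc]
  have hlast : (if (∃ h : ((Fin.last r : Fin (r+1)) : ℕ) + 1 < r + 1,
      τ ⟨((Fin.last r : Fin (r+1)) : ℕ) + 1, h⟩ < τ (Fin.last r)) then 1 else 0) = 0 := by
    have hh : ¬ (((Fin.last r : Fin (r+1)) : ℕ) + 1 < r + 1) := by simp
    simp [hh]
  rw [hlast, add_zero]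
  refine Finset.sum_congr rfl (fun j _ => ?_)
  congr 1
  apply propext
  constructor
  · rintro ⟨h', hlt⟩
    exact hlt
  · intro hlt
    exact ⟨by simp only [Fin.coe_castSucc]; omega, hlt⟩

lemma stdPerm_apply_lt' {r : ℕ} (a b : Fin (r+3)) (hab : a ≠ b) (τ : Equiv.Perm (Fin (r+1)))
    (j : Fin (r+1)) (x : Fin (r+3)) (hx : (x : ℕ) = (j : ℕ)) :
    stdPerm r a b hab τ x
      = (({a, b}ᶜ : Finset (Fin (r+3))).orderIsoOfFin (pairSet_card' hab) (τ j) : Fin (r+3)) := by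
  have h : (x : ℕ) < r + 1 := by rw [hx]; exact j.isLt
  rw [stdPerm_apply_lt r a b hab τ x h]
  have hje : (⟨(x : ℕ), h⟩ : Fin (r+1)) = j := Fin.ext hx
  rw [hje]

lemma stat_stdPerm (a b : Fin (r+3)) (hab : a ≠ b) (τ : Equiv.Perm (Fin (r+1))) :
    (DesSet (stdPerm r a b hab τ) \ {(⟨r, by omega⟩ : Fin (r+2))}).card
      = des τ + (if b < a then 1 else 0) := by
  set σ := stdPerm r a b hab τ with hσ
  have hset : DesSet σ \ {(⟨r, by omega⟩ : Fin (r+2))}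
      = univ.filter (fun i : Fin (r+2) => σ i.succ < σ i.castSucc ∧ (i : ℕ) ≠ r) := by
    ext i
    simp only [DesSet, Finset.mem_sdiff, Finset.mem_filter, Finset.mem_univ, true_and,
      Finset.mem_singleton, Fin.ext_iff]
  rw [hset, Finset.card_filter, Fin.sum_univ_castSucc, Fin.sum_univ_castSucc]
  have hmid : (if σ ((Fin.last r).castSucc : Fin (r+2)).succ
      < σ ((Fin.last r).castSucc : Fin (r+2)).castSucc
      ∧ ((((Fin.last r).castSucc : Fin (r+2))) : ℕ) ≠ r then 1 else 0) = 0 := by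
    have hh : ((((Fin.last r).castSucc : Fin (r+2))) : ℕ) = r := rfl
    simp [hh]
  have hlast : (if σ (Fin.last (r+1) : Fin (r+2)).succ < σ (Fin.last (r+1) : Fin (r+2)).castSucc
      ∧ (((Fin.last (r+1) : Fin (r+2))) : ℕ) ≠ r then 1 else 0)
      = (if b < a then 1 else 0) := by
    have h1 : σ (Fin.last (r+1) : Fin (r+2)).succ = b := by
      apply stdPerm_apply_top
      rfl
    have h2 : σ (Fin.last (r+1) : Fin (r+2)).castSucc = a := by
      apply stdPerm_apply_mid
      rfl
    rw [h1, h2]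
    have h3 : (((Fin.last (r+1) : Fin (r+2))) : ℕ) ≠ r := by simp
    simp [h3]
  rw [hmid, hlast, add_zero, des_eq_sum]
  congr 1
  refine Finset.sum_congr rfl (fun j _ => ?_)
  have hj := j.isLt
  have e1 : σ (j.castSucc.castSucc : Fin (r+2)).succ
      = (({a, b}ᶜ : Finset (Fin (r+3))).orderIsoOfFin (pairSet_card' hab)
          (τ ⟨(j : ℕ) + 1, by omega⟩) : Fin (r+3)) := by
    rw [hσ]
    exact stdPerm_apply_lt' a b hab τ ⟨(j : ℕ) + 1, by omega⟩ _ rfl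
  have e2 : σ (j.castSucc.castSucc : Fin (r+2)).castSucc
      = (({a, b}ᶜ : Finset (Fin (r+3))).orderIsoOfFin (pairSet_card' hab)
          (τ ⟨(j : ℕ), by omega⟩) : Fin (r+3)) := by
    rw [hσ]
    exact stdPerm_apply_lt' a b hab τ ⟨(j : ℕ), by omega⟩ _ rfl
  rw [e1, e2]
  have hiff : ((({a, b}ᶜ : Finset (Fin (r+3))).orderIsoOfFin (pairSet_card' hab)
        (τ ⟨(j : ℕ) + 1, by omega⟩) : Fin (r+3))
      < (({a, b}ᶜ : Finset (Fin (r+3))).orderIsoOfFin (pairSet_card' hab)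
        (τ ⟨(j : ℕ), by omega⟩) : Fin (r+3)))
      ↔ (τ ⟨(j : ℕ) + 1, by omega⟩ < τ ⟨(j : ℕ), by omega⟩) := by
    constructor
    · intro hlt
      exact (OrderIso.lt_iff_lt _).mp (Subtype.coe_lt_coe.mp hlt)
    · intro hlt
      exact Subtype.coe_lt_coe.mpr ((OrderIso.lt_iff_lt _).mpr hlt)
  have hcj : (((j.castSucc.castSucc : Fin (r+2))) : ℕ) ≠ r := by
    simp only [Fin.coe_castSucc]
    omega
  simp only [hcj, ne_eq, not_false_iff, and_true, hiff]

abbrev PairsNe (r : ℕ) := {p : Fin (r+3) × Fin (r+3) // p.1 ≠ p.2}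

noncomputable def toPerm (q : PairsNe r × Equiv.Perm (Fin (r+1))) : Equiv.Perm (Fin (r+3)) :=
  stdPerm r q.1.1.1 q.1.1.2 q.1.2 q.2

lemma toPerm_inj : Function.Injective (toPerm r) := by
  rintro ⟨⟨⟨a, b⟩, hab⟩, τ⟩ ⟨⟨⟨a', b'⟩, hab'⟩, τ'⟩ h
  simp only [toPerm] at h
  have ha : a = a' := by
    have h1 : stdPerm r a b hab τ ⟨r+1, by omega⟩ = stdPerm r a' b' hab' τ' ⟨r+1, by omega⟩ := by
      rw [h]
    rwa [stdPerm_apply_mid r a b hab τ _ rfl, stdPerm_apply_mid r a' b' hab' τ' _ rfl] at h1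
  have hb : b = b' := by
    have h1 : stdPerm r a b hab τ ⟨r+2, by omega⟩ = stdPerm r a' b' hab' τ' ⟨r+2, by omega⟩ := by
      rw [h]
    rwa [stdPerm_apply_top r a b hab τ _ rfl, stdPerm_apply_top r a' b' hab' τ' _ rfl] at h1
  subst ha
  subst hb
  have hτ : τ = τ' := by
    apply Equiv.ext
    intro j
    have h1 : stdPerm r a b hab τ ⟨(j : ℕ), by omega⟩
        = stdPerm r a b hab' τ' ⟨(j : ℕ), by omega⟩ := by rw [h]
    rw [stdPerm_apply_lt' a b hab τ j _ rfl, stdPerm_apply_lt' a b hab' τ' j _ rfl] at h1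
    have h2 := Subtype.coe_injective h1
    exact (({a, b}ᶜ : Finset (Fin (r+3))).orderIsoOfFin (pairSet_card' hab)).toEquiv.injective h2
  subst hτ
  simp only [Prod.mk.injEq]

lemma toPerm_bij : Function.Bijective (toPerm r) := by
  rw [Fintype.bijective_iff_injective_and_card]
  refine ⟨toPerm_inj r, ?_⟩
  rw [Fintype.card_prod, Fintype.card_perm, Fintype.card_fin, Fintype.card_perm, Fintype.card_fin]
  have hsub : Fintype.card (PairsNe r)
      = ((univ : Finset (Fin (r+3))).offDiag).card := by
    rw [Fintype.card_subtype]
    have hff : (univ.filter fun p : Fin (r+3) × Fin (r+3) => p.1 ≠ p.2)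
        = (univ : Finset (Fin (r+3))).offDiag := by
      ext p
      simp [Finset.mem_offDiag]
    rw [hff]
  rw [hsub, Finset.offDiag_card]
  rw [Finset.card_univ, Fintype.card_fin]
  have h1 : (r+3) * (r+3) - (r+3) = (r+3) * (r+2) := by
    have : (r+3) * (r+3) = (r+3) * (r+2) + (r+3) := by ring
    omega
  rw [h1]
  have h2 : (r+3).factorial = (r+3) * ((r+2) * (r+1).factorial) := by
    rw [show r+3 = (r+2)+1 from rfl, Nat.factorial_succ, show r+2 = (r+1)+1 from rfl,
      Nat.factorial_succ]
  rw [h2]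
  ring

lemma pair_sum :
    ∑ p : PairsNe r, (X : ℚ[X]) ^ (if p.1.2 < p.1.1 then 1 else 0)
      = ((((r : ℚ) + 2) * ((r : ℚ) + 3)) / 2) • ((X : ℚ[X]) + 1) := by
  classical
  have h0 : ∑ p ∈ univ.filter (fun p : Fin (r+3) × Fin (r+3) => p.1 ≠ p.2),
        (X : ℚ[X]) ^ (if p.2 < p.1 then 1 else 0)
      = ∑ p : PairsNe r, (X : ℚ[X]) ^ (if (p : Fin (r+3) × Fin (r+3)).2 < (p : Fin (r+3) × Fin (r+3)).1 then 1 else 0) :=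
    Finset.sum_subtype _ (by simp) _
  rw [← h0]
  simp only [pow_ite, pow_one, pow_zero]
  rw [Finset.sum_ite, Finset.sum_const, Finset.sum_const, Finset.filter_filter,
    Finset.filter_filter]
  have hA : (univ.filter fun p : Fin (r+3) × Fin (r+3) => p.1 ≠ p.2 ∧ p.2 < p.1)
      = univ.filter (fun p => p.2 < p.1) := by
    ext p
    simp only [Finset.mem_filter, Finset.mem_univ, true_and, and_iff_right_iff_imp]
    intro hlt
    exact (ne_of_gt hlt)
  have hB : (univ.filter fun p : Fin (r+3) × Fin (r+3) => p.1 ≠ p.2 ∧ ¬ p.2 < p.1)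
      = univ.filter (fun p => p.1 < p.2) := by
    ext p
    simp only [Finset.mem_filter, Finset.mem_univ, true_and, not_lt]
    constructor
    · rintro ⟨hne, hle⟩
      exact lt_of_le_of_ne hle hne
    · intro hlt
      exact ⟨ne_of_lt hlt, hlt.le⟩
  rw [hA, hB]
  set K1 := (univ.filter (fun p : Fin (r+3) × Fin (r+3) => p.2 < p.1)).card with hK1
  set K2 := (univ.filter (fun p : Fin (r+3) × Fin (r+3) => p.1 < p.2)).card with hK2
  have hswap : K2 = K1 := by
    rw [hK1, hK2]
    apply Finset.card_bij (fun p _ => (p.2, p.1))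
    · intro p hp
      simp only [Finset.mem_filter, Finset.mem_univ, true_and] at hp ⊢
      exact hp
    · intro p hp q hq hpq
      rw [Prod.ext_iff] at hpq ⊢
      exact ⟨hpq.2, hpq.1⟩
    · intro p hp
      refine ⟨(p.2, p.1), ?_, rfl⟩
      simp only [Finset.mem_filter, Finset.mem_univ, true_and] at hp ⊢
      exact hp
  have hunion : K1 + K2 = (r+3) * (r+3) - (r+3) := by
    have hdisj : Disjoint (univ.filter (fun p : Fin (r+3) × Fin (r+3) => p.2 < p.1))
        (univ.filter (fun p : Fin (r+3) × Fin (r+3) => p.1 < p.2)) := by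
      rw [Finset.disjoint_filter]
      intro p _ h1
      exact not_lt.mpr h1.le
    rw [hK1, hK2, ← Finset.card_union_of_disjoint hdisj]
    have hu : (univ.filter (fun p : Fin (r+3) × Fin (r+3) => p.2 < p.1))
        ∪ (univ.filter (fun p : Fin (r+3) × Fin (r+3) => p.1 < p.2))
        = (univ : Finset (Fin (r+3))).offDiag := by
      ext p
      simp only [Finset.mem_union, Finset.mem_filter, Finset.mem_univ, true_and,
        Finset.mem_offDiag]
      constructor
      · rintro (h | h)
        · exact (ne_of_gt h)
        · exact (ne_of_lt h)
      · intro hne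
        rcases lt_or_gt_of_ne hne with h | h
        · exact Or.inr h
        · exact Or.inl h
    rw [hu, Finset.offDiag_card, Finset.card_univ, Fintype.card_fin]
  have hle : (r+3) ≤ (r+3) * (r+3) := Nat.le_mul_of_pos_left _ (by omega)
  have h3 : K1 + K2 + (r+3) = (r+3) * (r+3) := by
    rw [hunion, Nat.sub_add_cancel hle]
  have hc : (K1 : ℚ) + (K2 : ℚ) + ((r : ℚ) + 3) = ((r : ℚ) + 3) * ((r : ℚ) + 3) := by
    exact_mod_cast congrArg (Nat.cast : ℕ → ℚ) h3
  have hK2Q : (K2 : ℚ) = (K1 : ℚ) := by exact_mod_cast hswap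
  have hK1Q : (K1 : ℚ) = ((r : ℚ) + 2) * ((r : ℚ) + 3) / 2 := by
    linear_combination (1/2 : ℚ) * hc - (1/2 : ℚ) * hK2Q
  rw [hswap, ← Nat.cast_smul_eq_nsmul ℚ K1 ((X : ℚ[X])),
    ← Nat.cast_smul_eq_nsmul ℚ K1 ((1 : ℚ[X])), hK1Q, smul_add]

lemma final_sum :
    ∑ σ : Equiv.Perm (Fin (r+3)),
        (X : ℚ[X]) ^ ((DesSet σ \ {(⟨r, by omega⟩ : Fin (r+2))}).card)
      = ((((r : ℚ) + 2) * ((r : ℚ) + 3)) / 2) •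
          (((X : ℚ[X]) + 1) * ∑ τ : Equiv.Perm (Fin (r+1)), (X : ℚ[X]) ^ des τ) := by
  classical
  have hstep := Fintype.sum_bijective (toPerm r) (toPerm_bij r)
    (fun q => (X : ℚ[X]) ^ ((DesSet (toPerm r q) \ {(⟨r, by omega⟩ : Fin (r+2))}).card))
    (fun σ => (X : ℚ[X]) ^ ((DesSet σ \ {(⟨r, by omega⟩ : Fin (r+2))}).card))
    (fun q => rfl)
  rw [← hstep]
  have hsummand : ∀ q : PairsNe r × Equiv.Perm (Fin (r+1)),
      (X : ℚ[X]) ^ ((DesSet (toPerm r q) \ {(⟨r, by omega⟩ : Fin (r+2))}).card)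
        = (X : ℚ[X]) ^ (if q.1.1.2 < q.1.1.1 then 1 else 0) * (X : ℚ[X]) ^ des q.2 := by
    rintro ⟨⟨⟨a, b⟩, hab⟩, τ⟩
    rw [toPerm]
    rw [stat_stdPerm r a b hab τ, pow_add, mul_comm]
  rw [Finset.sum_congr rfl (fun q _ => hsummand q)]
  rw [Fintype.sum_prod_type]
  have hfac : ∀ p : PairsNe r,
      ∑ τ : Equiv.Perm (Fin (r+1)),
          (X : ℚ[X]) ^ (if p.1.2 < p.1.1 then 1 else 0) * (X : ℚ[X]) ^ des τ
        = (X : ℚ[X]) ^ (if p.1.2 < p.1.1 then 1 else 0)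
            * ∑ τ : Equiv.Perm (Fin (r+1)), (X : ℚ[X]) ^ des τ := by
    intro p
    rw [Finset.mul_sum]
  rw [Finset.sum_congr rfl (fun p _ => hfac p), ← Finset.sum_mul, pair_sum r,
    smul_mul_assoc]

end Std

theorem sum_N0_eq (n : ℕ) (hn : 2 ≤ n) :
    ∑ A ∈ Finset.univ.filter (fun A : Finset (Fin n) =>
        (⟨n - 2, by omega⟩ : Fin n) ∉ A),
      (((n + 1).factorial : ℚ) / (Nat.card ↥(Wsub A) : ℚ)) • (X - 1) ^ A.card
      = ((n : ℚ) * (n + 1) / 2) • ((X + 1) * Euler (n - 1)) := by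
  obtain ⟨r, rfl⟩ : ∃ r, n = r + 2 := ⟨n - 2, by omega⟩
  simp only [show r + 2 - 2 = r from rfl, show r + 2 - 1 = r + 1 from rfl]
  have hfil : (univ.filter (fun A : Finset (Fin (r+2)) =>
        (⟨r, by omega⟩ : Fin (r+2)) ∉ A))
      = ({(⟨r, by omega⟩ : Fin (r+2))}ᶜ : Finset (Fin (r+2))).powerset := by
    ext A
    simp only [Finset.mem_filter, Finset.mem_univ, true_and, Finset.mem_powerset,
      Finset.subset_compl_singleton]
  rw [hfil]
  have hcoef : ∀ A : Finset (Fin (r+2)),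
      ((((r+2) + 1).factorial : ℚ) / (Nat.card (Wsub A) : ℚ)) • ((X : ℚ[X]) - 1) ^ A.card
        = ((Dset A).card : ℚ) • ((X : ℚ[X]) - 1) ^ A.card := by
    intro A
    rw [Wsub_eq_Pgrp, ratio_eq]
  rw [Finset.sum_congr rfl (fun A _ => hcoef A)]
  rw [main_sum ({(⟨r, by omega⟩ : Fin (r+2))}ᶜ : Finset (Fin (r+2)))]
  have hsd : ∀ σ : Equiv.Perm (Fin (r+3)),
      DesSet σ ∩ ({(⟨r, by omega⟩ : Fin (r+2))}ᶜ : Finset (Fin (r+2)))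
        = DesSet σ \ {(⟨r, by omega⟩ : Fin (r+2))} := by
    intro σ
    rw [sdiff_eq]
    rfl
  rw [Finset.sum_congr rfl (fun σ _ => by rw [hsd σ])]
  rw [final_sum r]
  show _ = (((r+2 : ℕ) : ℚ) * (((r+2 : ℕ) : ℚ) + 1) / 2) • (((X : ℚ[X]) + 1) * Euler (r+1))
  rw [Euler]
  congr 1
  push_cast
  ring
end
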